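/- arXiv:1107.3882 — 4 statements merged into one kernel-verified Lean document; each statement's English description precedes it below -/
import Mathlib

section
/- For any n ∈ ℕ, n ≥ 1, and any positive integers i₁,…,iₙ, one has Ω(i₁,…,iₙ) = Ω(i₁−1, i₂,…,iₙ) + Ω(i₁, i₂−1, i₃,…,iₙ) + ⋯ + Ω(i₁,…,i_{n−1}, iₙ−1), i.e., the sum over k = 1,…,n of Ω with the k-th argument decreased by 1 and all other arguments unchanged. -/
/-- The monotonicity condition: for the list of block lengths `a`, a permutation `τ` of
`{0, …, a.sum}` must increase on the `k`-th block for even `k` (0-indexed, i.e. odd blocks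
in 1-indexed counting) and decrease on the `k`-th block for odd `k`. -/
def MonotCond (a : List ℕ) (τ : Equiv.Perm (Fin (a.sum + 1))) : Prop :=
  ∀ k, k < a.length →
    ∀ j, (a.take k).sum ≤ j → j < (a.take (k + 1)).sum →
      ∀ h : j + 1 < a.sum + 1,
        if k % 2 = 0
        then τ ⟨j, Nat.lt_of_succ_lt h⟩ < τ ⟨j + 1, h⟩
        else τ ⟨j + 1, h⟩ < τ ⟨j, Nat.lt_of_succ_lt h⟩

/-- `Omega a` is the number of permutations of `{0, …, a.sum}` with the prescribed
alternating monotonicity pattern given by the block lengths in `a`. -/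
noncomputable def Omega (a : List ℕ) : ℕ :=
  Nat.card {τ : Equiv.Perm (Fin (a.sum + 1)) // MonotCond a τ}

open Equiv List

section Helpers

open scoped Classical in
/-- pointwise signature condition -/
def Sat (N : ℕ) (s : ℕ → Prop) (τ : Equiv.Perm (Fin (N + 1))) : Prop :=
  ∀ j, ∀ h : j + 1 < N + 1,
    if s j then τ ⟨j, Nat.lt_of_succ_lt h⟩ < τ ⟨j + 1, h⟩
    else τ ⟨j + 1, h⟩ < τ ⟨j, Nat.lt_of_succ_lt h⟩

noncomputable def Cnt (N : ℕ) (s : ℕ → Prop) : ℕ :=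
  Nat.card {τ : Equiv.Perm (Fin (N + 1)) // Sat N s τ}

def Bsig (a : List ℕ) (j : ℕ) : Prop :=
  ∃ k, k % 2 = 0 ∧ (a.take k).sum ≤ j ∧ j < (a.take (k + 1)).sum

lemma take_sum_mono (a : List ℕ) {m m' : ℕ} (h : m ≤ m') :
    (a.take m).sum ≤ (a.take m').sum := by
  have h2 : m' = m + (m' - m) := by omega
  rw [h2, List.take_add, List.sum_append]
  exact Nat.le_add_right _ _

lemma exists_block (a : List ℕ) {j : ℕ} (hj : j < a.sum) :
    ∃ m, (a.take m).sum ≤ j ∧ j < (a.take (m + 1)).sum := by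
  classical
  have hP : ∃ m, j < (a.take m).sum := ⟨a.length, by simpa using hj⟩
  have hm' : j < (a.take (Nat.find hP)).sum := Nat.find_spec hP
  have h1 : Nat.find hP ≠ 0 := by
    intro h; rw [h] at hm'; simp at hm'
  refine ⟨Nat.find hP - 1, ?_, ?_⟩
  · have := Nat.find_min hP (m := Nat.find hP - 1) (by omega)
    omega
  · have h2 : Nat.find hP - 1 + 1 = Nat.find hP := by omega
    rw [h2]; exact hm'

lemma bsig_iff (a : List ℕ) {m j : ℕ} (h1 : (a.take m).sum ≤ j)
    (h2 : j < (a.take (m + 1)).sum) : Bsig a j ↔ m % 2 = 0 := by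
  constructor
  · rintro ⟨k, hk, hk1, hk2⟩
    have hkm : k = m := by
      by_contra hne
      rcases Nat.lt_or_ge k m with h | h
      · have := take_sum_mono a (show k + 1 ≤ m by omega); omega
      · have := take_sum_mono a (show m + 1 ≤ k by omega); omega
    omega
  · exact fun hm => ⟨m, hm, h1, h2⟩

/-- insertion of the maximum at position `q` -/
def ins {N : ℕ} (q : Fin (N + 1)) (σ : Equiv.Perm (Fin N)) : Equiv.Perm (Fin (N + 1)) :=
  ((finSuccEquiv' q).trans (Equiv.optionCongr σ)).trans (finSuccEquiv' (Fin.last N)).symm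

lemma ins_self {N : ℕ} (q : Fin (N + 1)) (σ : Equiv.Perm (Fin N)) :
    ins q σ q = Fin.last N := by
  simp [ins, finSuccEquiv'_at, finSuccEquiv'_symm_none]

lemma ins_succAbove {N : ℕ} (q : Fin (N + 1)) (σ : Equiv.Perm (Fin N)) (j : Fin N) :
    ins q σ (q.succAbove j) = (σ j).castSucc := by
  simp [ins, finSuccEquiv'_succAbove, finSuccEquiv'_symm_some]

lemma ins_symm_last {N : ℕ} (q : Fin (N + 1)) (σ : Equiv.Perm (Fin N)) :
    (ins q σ).symm (Fin.last N) = q := by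
  rw [Equiv.symm_apply_eq, ins_self]

lemma ins_injective {N : ℕ} (q : Fin (N + 1)) {σ σ' : Equiv.Perm (Fin N)}
    (h : ins q σ = ins q σ') : σ = σ' := by
  ext j
  have h2 : ins q σ (q.succAbove j) = ins q σ' (q.succAbove j) := by rw [h]
  rw [ins_succAbove, ins_succAbove] at h2
  exact congrArg Fin.val (Fin.castSucc_injective _ h2)

lemma ins_lt {N : ℕ} (q : Fin (N + 1)) (σ : Equiv.Perm (Fin N)) {x : ℕ}
    (hx : x < q.val) (hx' : x < N) :
    ins q σ ⟨x, by omega⟩ = ((σ ⟨x, hx'⟩).castSucc) := by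
  have h : (⟨x, by omega⟩ : Fin (N+1)) = q.succAbove ⟨x, hx'⟩ := by
    rw [Fin.succAbove_of_castSucc_lt _ _ (by simpa [Fin.lt_def] using hx)]
    rfl
  rw [h, ins_succAbove]

lemma ins_gt {N : ℕ} (q : Fin (N + 1)) (σ : Equiv.Perm (Fin N)) {x : ℕ}
    (hx : q.val < x) (hx' : x < N + 1) :
    ins q σ ⟨x, hx'⟩ = ((σ ⟨x - 1, by omega⟩).castSucc) := by
  have h : (⟨x, hx'⟩ : Fin (N+1)) = q.succAbove ⟨x - 1, by omega⟩ := by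
    rw [Fin.succAbove_of_le_castSucc _ _ (by simp [Fin.le_def]; omega)]
    ext; simp; omega
  rw [h, ins_succAbove]

end Helpers

section Core
open scoped Classical

lemma gencore (M : ℕ) (s s' : ℕ → Prop) (q : ℕ) (hq1 : 1 ≤ q) (hqN : q ≤ M + 1)
    (A1 : ∀ j, j + 1 < q → (s' j ↔ s j))
    (A2 : ∀ j, q ≤ j → j + 1 < M + 1 → (s' j ↔ s (j + 1)))
    (A3 : s (q - 1))
    (A4 : q < M + 1 → ¬ s q)
    (σ : Equiv.Perm (Fin (M + 1))) :
    (Sat (M + 1) s (ins ⟨q, by omega⟩ σ) ∧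
      ∀ hq : q < M + 1,
        if s' (q - 1) then σ ⟨q - 1, by omega⟩ < σ ⟨q, hq⟩
        else σ ⟨q, hq⟩ < σ ⟨q - 1, by omega⟩)
    ↔ Sat M s' σ := by
  constructor
  · rintro ⟨hτ, hJ⟩ j hj
    rcases lt_trichotomy (j + 1) q with hc | hc | hc
    · -- inside the part strictly before q
      have h2 := hτ j (by omega)
      rw [ins_lt _ _ (show j < q by omega) (by omega),
        ins_lt _ _ (show j + 1 < q by omega) (by omega)] at h2
      by_cases h3 : s' j
      · rw [if_pos ((A1 j hc).mp h3)] at h2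
        rw [if_pos h3]
        exact Fin.castSucc_lt_castSucc_iff.mp h2
      · rw [if_neg (fun hh => h3 ((A1 j hc).mpr hh))] at h2
        rw [if_neg h3]
        exact Fin.castSucc_lt_castSucc_iff.mp h2
    · -- junction
      have hqM : q < M + 1 := by omega
      have h2 := hJ hqM
      have e1 : (⟨q - 1, by omega⟩ : Fin (M + 1)) = ⟨j, by omega⟩ := Fin.ext (by simp; omega)
      have e2 : (⟨q, hqM⟩ : Fin (M + 1)) = ⟨j + 1, hj⟩ := Fin.ext (by simp; omega)
      have e3 : s' (q - 1) ↔ s' j := by rw [show q - 1 = j by omega]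
      rw [e1, e2] at h2
      by_cases h3 : s' j
      · rw [if_pos (e3.mpr h3)] at h2; rw [if_pos h3]; exact h2
      · rw [if_neg (fun hh => h3 (e3.mp hh))] at h2; rw [if_neg h3]; exact h2
    · -- after q
      have h2 := hτ (j + 1) (by omega)
      rw [ins_gt _ _ (show q < j + 1 by omega) (by omega),
        ins_gt _ _ (show q < j + 1 + 1 by omega) (by omega)] at h2
      have e1 : (⟨j + 1 - 1, by omega⟩ : Fin (M + 1)) = ⟨j, by omega⟩ := Fin.ext (by simp)
      have e2 : (⟨j + 1 + 1 - 1, by omega⟩ : Fin (M + 1)) = ⟨j + 1, hj⟩ := Fin.ext (by simp)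
      rw [e1, e2] at h2
      have e3 : s' j ↔ s (j + 1) := A2 j (by omega) (by omega)
      by_cases h3 : s' j
      · rw [if_pos (e3.mp h3)] at h2
        rw [if_pos h3]
        exact Fin.castSucc_lt_castSucc_iff.mp h2
      · rw [if_neg (fun hh => h3 (e3.mpr hh))] at h2
        rw [if_neg h3]
        exact Fin.castSucc_lt_castSucc_iff.mp h2
  · intro hσ
    constructor
    · intro j hj
      rcases lt_trichotomy (j + 1) q with hc | hc | hc
      · have h2 := hσ j (by omega)
        rw [ins_lt _ _ (show j < q by omega) (by omega),
          ins_lt _ _ (show j + 1 < q by omega) (by omega)]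
        by_cases h3 : s j
        · rw [if_pos ((A1 j hc).mpr h3)] at h2
          rw [if_pos h3]
          exact Fin.castSucc_lt_castSucc_iff.mpr h2
        · rw [if_neg (fun hh => h3 ((A1 j hc).mp hh))] at h2
          rw [if_neg h3]
          exact Fin.castSucc_lt_castSucc_iff.mpr h2
      · -- ascent into the max
        have hsj : s j := by rw [show j = q - 1 by omega]; exact A3
        rw [if_pos hsj]
        have e2 : (⟨j + 1, hj⟩ : Fin (M + 2)) = ⟨q, by omega⟩ := Fin.ext (by simp; omega)
        rw [e2, ins_self, ins_lt _ _ (show j < q by omega) (by omega)]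
        exact Fin.castSucc_lt_last _
      · rcases Nat.lt_or_ge q j with hc2 | hc2
        · -- j > q
          have hjq : q < j := by omega
          have h2 := hσ (j - 1) (by omega)
          rw [ins_gt _ _ (show q < j by omega) (by omega),
            ins_gt _ _ (show q < j + 1 by omega) (by omega)]
          have e1 : (⟨j - 1 + 1, by omega⟩ : Fin (M + 1)) = ⟨j + 1 - 1, by omega⟩ :=
            Fin.ext (by simp; omega)
          rw [e1] at h2
          have e3 : s' (j - 1) ↔ s j := by
            have := A2 (j - 1) (by omega) (by omega)
            rw [show j - 1 + 1 = j by omega] at this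
            exact this
          by_cases h3 : s j
          · rw [if_pos (e3.mpr h3)] at h2
            rw [if_pos h3]
            exact Fin.castSucc_lt_castSucc_iff.mpr h2
          · rw [if_neg (fun hh => h3 (e3.mp hh))] at h2
            rw [if_neg h3]
            exact Fin.castSucc_lt_castSucc_iff.mpr h2
        · -- j = q : descent out of the max
          have hjq : j = q := by omega
          have hqM : q < M + 1 := by omega
          have hsj : ¬ s j := by rw [hjq]; exact A4 hqM
          rw [if_neg hsj]
          have e2 : (⟨j, Nat.lt_of_succ_lt hj⟩ : Fin (M + 2)) = ⟨q, by omega⟩ :=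
            Fin.ext (by simp; omega)
          rw [e2, ins_self, ins_gt _ _ (show q < j + 1 by omega) (by omega)]
          exact Fin.castSucc_lt_last _
    · intro hqM
      have h2 := hσ (q - 1) (by omega)
      have e1 : (⟨q - 1 + 1, by omega⟩ : Fin (M + 1)) = ⟨q, hqM⟩ := Fin.ext (by simp; omega)
      rw [e1] at h2
      exact h2

lemma nat_card_sigma {ι : Type*} [Fintype ι] (D : ι → Type*) [∀ k, Finite (D k)] :
    Nat.card (Sigma D) = ∑ k, Nat.card (D k) := by
  letI : ∀ k, Fintype (D k) := fun k => Fintype.ofFinite _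
  simp [Nat.card_eq_fintype_card]

lemma omega_eq_cnt (a : List ℕ) : Omega a = Cnt a.sum (Bsig a) := by
  apply Nat.card_congr (Equiv.subtypeEquivRight ?_)
  intro τ
  constructor
  · intro h j hj
    have hja : j < a.sum := by omega
    obtain ⟨m, hm1, hm2⟩ := exists_block a hja
    have hml : m < a.length := by
      by_contra hml
      rw [List.take_of_length_le (by omega)] at hm1
      omega
    have h2 := h m hml j hm1 hm2 hj
    have hb := bsig_iff a hm1 hm2
    by_cases h3 : Bsig a j
    · rw [if_pos (hb.mp h3)] at h2; rw [if_pos h3]; exact h2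
    · rw [if_neg (fun hh => h3 (hb.mpr hh))] at h2; rw [if_neg h3]; exact h2
  · intro h k hk j h1 h2 hj
    have h3 := h j hj
    have hb := bsig_iff a h1 h2
    by_cases h4 : k % 2 = 0
    · rw [if_pos (hb.mpr h4)] at h3; rw [if_pos h4]; exact h3
    · rw [if_neg (fun hh => h4 (hb.mp hh))] at h3; rw [if_neg h4]; exact h3

end Core

section Main
open scoped Classical

lemma lt_transfer {N : ℕ} (σ : Equiv.Perm (Fin N)) {x y x' y' : Fin N}
    (hx : x.val = x'.val) (hy : y.val = y'.val) (h : σ x < σ y) : σ x' < σ y' := by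
  rwa [show x' = x from Fin.ext hx.symm, show y' = y from Fin.ext hy.symm]

set_option maxHeartbeats 4000000 in
lemma main_count (M n : ℕ) (hn : 1 ≤ n) (i : Fin n → ℕ) (hi : ∀ k, 0 < i k)
    (hM : (List.ofFn i).sum = M + 1) :
    Cnt (M + 1) (Bsig (List.ofFn i)) =
      ∑ k : Fin n, Cnt M (Bsig (List.ofFn (Function.update i k (i k - 1)))) := by
  set c := List.ofFn i with hc
  set c' : Fin n → List ℕ := fun k => List.ofFn (Function.update i k (i k - 1)) with hc'
  have len : c.length = n := by simp [hc]
  have hSsucc : ∀ m, ∀ hm : m < n, (c.take (m + 1)).sum = (c.take m).sum + i ⟨m, hm⟩ := by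
    intro m hm
    rw [List.sum_take_succ c m (by omega)]
    congr 1
    simp [hc]
  have hSn : (c.take n).sum = M + 1 := by
    rw [List.take_of_length_le (le_of_eq len)]
    exact hM
  have hS1 : 1 ≤ (c.take 1).sum := by
    rw [hSsucc 0 hn]
    have := hi ⟨0, hn⟩; simp; omega
  have hstrict : ∀ u v : ℕ, u < v → v ≤ n → (c.take u).sum < (c.take v).sum := by
    intro u v h1 h2
    have h3 := hSsucc u (by omega)
    have h4 := take_sum_mono c (show u + 1 ≤ v by omega)
    have h5 := hi ⟨u, by omega⟩
    omega
  have hS' : ∀ (k : Fin n) (m : ℕ),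
      ((c' k).take m).sum = (c.take m).sum - (if k.val < m then 1 else 0) := by
    intro k m
    induction m with
    | zero => simp
    | succ m ih =>
      by_cases hm : m < n
      · rw [List.sum_take_succ (c' k) m (by simp [hc']; omega), hSsucc m hm, ih]
        have h2 : (c' k)[m]'(by simp [hc']; omega) = Function.update i k (i k - 1) ⟨m, hm⟩ := by
          simp [hc']
        rw [h2, Function.update_apply]
        have hik := hi k
        by_cases h3 : (⟨m, hm⟩ : Fin n) = k
        · rw [if_pos h3]
          have h4 : k.val = m := by rw [← h3]
          have h5 : i ⟨m, hm⟩ = i k := by rw [h3]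
          rw [if_neg (by omega), if_pos (by omega)]
          omega
        · rw [if_neg h3]
          have h4 : m ≠ k.val := fun hh => h3 (Fin.ext hh)
          rcases Nat.lt_or_ge k.val m with h5 | h5
          · have h6 : 1 ≤ (c.take m).sum := le_trans hS1 (take_sum_mono c (by omega))
            rw [if_pos h5, if_pos (by omega)]
            omega
          · rw [if_neg (by omega), if_neg (by omega)]
            omega
      · have h1 : (c' k).take (m + 1) = (c' k).take m := by
          rw [List.take_of_length_le (by simp [hc']; omega),
            List.take_of_length_le (by simp [hc']; omega)]
        have h2 : c.take (m + 1) = c.take m := by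
          rw [List.take_of_length_le (by omega), List.take_of_length_le (by omega)]
        have hkm : k.val < m := by have := k.isLt; omega
        rw [h1, ih, h2, if_pos hkm, if_pos (by omega)]
  set q : Fin n → ℕ :=
    fun k => if k.val % 2 = 0 then (c.take (k.val + 1)).sum else (c.take k.val).sum with hq
  have hq1 : ∀ k : Fin n, 1 ≤ q k := by
    intro k
    simp only [hq]
    split_ifs with h
    · exact le_trans hS1 (take_sum_mono c (by omega))
    · have hk0 : k.val ≠ 0 := by omega
      exact le_trans hS1 (take_sum_mono c (by omega))
  have hqM : ∀ k : Fin n, q k ≤ M + 1 := by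
    intro k
    have hkn := k.isLt
    rw [← hSn]
    simp only [hq]
    split_ifs with h
    · exact take_sum_mono c (by omega)
    · exact take_sum_mono c (by omega)
  have key : ∀ k : Fin n,
      (∀ j, j + 1 < q k → (Bsig (c' k) j ↔ Bsig c j)) ∧
      (∀ j, q k ≤ j → j + 1 < M + 1 → (Bsig (c' k) j ↔ Bsig c (j + 1))) ∧
      Bsig c (q k - 1) ∧
      (q k < M + 1 → ¬ Bsig c (q k)) ∧
      (q k < M + 1 → (Bsig (c' k) (q k - 1) ↔ ¬ (k.val % 2 = 0))) := by
    intro k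
    have hkn := k.isLt
    have hik := hi k
    by_cases hk2 : k.val % 2 = 0
    · -- even block : q k = S(k+1)
      have hqk : q k = (c.take (k.val + 1)).sum := by simp only [hq]; rw [if_pos hk2]
      have hqs : (c.take (k.val + 1)).sum = (c.take k.val).sum + i k := by
        rw [hSsucc k.val hkn, Fin.eta]
      have hq1k : 1 ≤ q k := hq1 k
      have hqMk : q k ≤ M + 1 := hqM k
      refine ⟨?_, ?_, ?_, ?_, ?_⟩
      · -- A1
        intro j hj
        rw [hqk] at hj
        obtain ⟨m, hm1, hm2⟩ := exists_block c (show j < c.sum by rw [hM]; omega)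
        have hmk : m ≤ k.val := by
          by_contra hcon
          have := take_sum_mono c (show k.val + 1 ≤ m by omega)
          omega
        have e1 := hS' k m
        have e2 := hS' k (m + 1)
        rw [if_neg (show ¬ k.val < m by omega)] at e1
        by_cases hmk2 : m = k.val
        · rw [hmk2] at hm1 hm2 e1 e2
          rw [if_pos (by omega)] at e2
          rw [bsig_iff (c' k) (show ((c' k).take k.val).sum ≤ j by omega)
              (show j < ((c' k).take (k.val+1)).sum by omega), bsig_iff c hm1 hm2]
        · rw [if_neg (by omega)] at e2
          rw [bsig_iff (c' k) (show ((c' k).take m).sum ≤ j by omega)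
              (show j < ((c' k).take (m+1)).sum by omega), bsig_iff c hm1 hm2]
      · -- A2
        intro j hqj hj1
        rw [hqk] at hqj
        obtain ⟨m, hm1, hm2⟩ := exists_block c (show j + 1 < c.sum by rw [hM]; omega)
        have hmk : k.val + 1 ≤ m := by
          by_contra hcon
          have := take_sum_mono c (show m + 1 ≤ k.val + 1 by omega)
          omega
        have hpos : 1 ≤ (c.take m).sum := le_trans hS1 (take_sum_mono c (by omega))
        have e1 := hS' k m
        have e2 := hS' k (m + 1)
        rw [if_pos (by omega)] at e1
        rw [if_pos (by omega)] at e2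
        rw [bsig_iff (c' k) (show ((c' k).take m).sum ≤ j by omega)
            (show j < ((c' k).take (m+1)).sum by omega), bsig_iff c hm1 hm2]
      · -- A3
        rw [hqk] at *
        exact (bsig_iff c (m := k.val) (by omega) (by omega)).mpr hk2
      · -- A4
        intro hqlt
        rw [hqk] at hqlt ⊢
        have hk1n : k.val + 1 < n := by
          by_contra hcon
          have h5 : k.val + 1 = n := by omega
          rw [h5, hSn] at hqlt
          omega
        have hqs2 := hSsucc (k.val + 1) hk1n
        have hi2 := hi ⟨k.val + 1, hk1n⟩
        intro hb
        have := (bsig_iff c (m := k.val + 1) (le_refl _) (by omega)).mp hb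
        omega
      · -- junction sign : false
        intro hqlt
        rw [hqk] at hqlt ⊢
        have hk1n : k.val + 1 < n := by
          by_contra hcon
          have h5 : k.val + 1 = n := by omega
          rw [h5, hSn] at hqlt
          omega
        have hqs2 := hSsucc (k.val + 1) hk1n
        have hi2 := hi ⟨k.val + 1, hk1n⟩
        have e1 := hS' k (k.val + 1)
        have e2 := hS' k (k.val + 1 + 1)
        rw [if_pos (by omega)] at e1
        rw [if_pos (by omega)] at e2
        have hq1k' : 1 ≤ (c.take (k.val + 1)).sum := le_trans hS1 (take_sum_mono c (by omega))
        rw [bsig_iff (c' k)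
            (show ((c' k).take (k.val+1)).sum ≤ (c.take (k.val+1)).sum - 1 by omega)
            (show (c.take (k.val+1)).sum - 1 < ((c' k).take (k.val+1+1)).sum by omega)]
        constructor
        · intro h; omega
        · intro h; omega
    · -- odd block : q k = S k
      have hqk : q k = (c.take k.val).sum := by simp only [hq]; rw [if_neg hk2]
      have hkpos : 1 ≤ k.val := by omega
      have hk1n : k.val - 1 < n := by omega
      have hqs : (c.take k.val).sum = (c.take (k.val - 1)).sum + i ⟨k.val - 1, hk1n⟩ := by
        have h5 := hSsucc (k.val - 1) hk1n
        rw [show k.val - 1 + 1 = k.val by omega] at h5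
        exact h5
      have hi1 := hi ⟨k.val - 1, hk1n⟩
      have hqsk : (c.take (k.val + 1)).sum = (c.take k.val).sum + i k := by
        rw [hSsucc k.val hkn, Fin.eta]
      refine ⟨?_, ?_, ?_, ?_, ?_⟩
      · -- A1
        intro j hj
        rw [hqk] at hj
        have hqMk := hqM k
        rw [hqk] at hqMk
        obtain ⟨m, hm1, hm2⟩ := exists_block c (show j < c.sum by rw [hM]; omega)
        have hmk : m < k.val := by
          by_contra hcon
          have := take_sum_mono c (show k.val ≤ m by omega)
          omega
        have e1 := hS' k m
        have e2 := hS' k (m + 1)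
        rw [if_neg (by omega)] at e1
        rw [if_neg (by omega)] at e2
        rw [bsig_iff (c' k) (show ((c' k).take m).sum ≤ j by omega)
            (show j < ((c' k).take (m+1)).sum by omega), bsig_iff c hm1 hm2]
      · -- A2
        intro j hqj hj1
        rw [hqk] at hqj
        obtain ⟨m, hm1, hm2⟩ := exists_block c (show j + 1 < c.sum by rw [hM]; omega)
        have hmk : k.val ≤ m := by
          by_contra hcon
          have := take_sum_mono c (show m + 1 ≤ k.val by omega)
          omega
        have e1 := hS' k m
        have e2 := hS' k (m + 1)
        rw [if_pos (by omega)] at e2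
        by_cases hmm : m = k.val
        · rw [hmm] at hm1 hm2 e1 e2
          rw [if_neg (by omega)] at e1
          rw [bsig_iff (c' k) (show ((c' k).take k.val).sum ≤ j by omega)
              (show j < ((c' k).take (k.val+1)).sum by omega), bsig_iff c hm1 hm2]
        · rw [if_pos (by omega)] at e1
          have hpos : 1 ≤ (c.take m).sum := le_trans hS1 (take_sum_mono c (by omega))
          rw [bsig_iff (c' k) (show ((c' k).take m).sum ≤ j by omega)
              (show j < ((c' k).take (m+1)).sum by omega), bsig_iff c hm1 hm2]
      · -- A3
        rw [hqk]
        refine (bsig_iff c (m := k.val - 1) (by omega) ?_).mpr (by omega)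
        rw [show k.val - 1 + 1 = k.val by omega]
        omega
      · -- A4
        intro hqlt
        rw [hqk] at hqlt ⊢
        intro hb
        have := (bsig_iff c (m := k.val) (le_refl _) (by omega)).mp hb
        omega
      · -- junction sign : true
        intro hqlt
        rw [hqk]
        have e1 := hS' k (k.val - 1)
        have e2 := hS' k k.val
        rw [if_neg (by omega)] at e1
        rw [if_neg (by omega)] at e2
        rw [bsig_iff (c' k) (m := k.val - 1)
            (show ((c' k).take (k.val - 1)).sum ≤ (c.take k.val).sum - 1 by omega)
            (by rw [show k.val - 1 + 1 = k.val by omega]; omega)]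
        constructor
        · intro _; exact hk2
        · intro _; omega
  have qinj : ∀ k k' : Fin n, k.val < k'.val → q k = q k' →
      (k'.val = k.val + 1 ∧ k.val % 2 = 0) := by
    intro k k' hlt heq
    have hkn := k.isLt
    have hk'n := k'.isLt
    simp only [hq] at heq
    by_cases h1 : k.val % 2 = 0 <;> by_cases h2 : k'.val % 2 = 0
    · rw [if_pos h1, if_pos h2] at heq
      have := hstrict (k.val + 1) (k'.val + 1) (by omega) (by omega)
      omega
    · rw [if_pos h1, if_neg h2] at heq
      by_cases h3 : k'.val = k.val + 1
      · exact ⟨h3, h1⟩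
      · have := hstrict (k.val + 1) k'.val (by omega) (by omega)
        omega
    · rw [if_neg h1, if_pos h2] at heq
      have := hstrict k.val (k'.val + 1) (by omega) (by omega)
      omega
    · rw [if_neg h1, if_neg h2] at heq
      have := hstrict k.val k'.val (by omega) (by omega)
      omega
  -- the gencore instantiation
  have gc : ∀ (k : Fin n) (σ : Equiv.Perm (Fin (M + 1))),
      (Sat (M + 1) (Bsig c) (ins ⟨q k, by have := hqM k; omega⟩ σ) ∧
        ∀ hqlt : q k < M + 1,
          if Bsig (c' k) (q k - 1) then σ ⟨q k - 1, by omega⟩ < σ ⟨q k, hqlt⟩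
          else σ ⟨q k, hqlt⟩ < σ ⟨q k - 1, by omega⟩)
      ↔ Sat M (Bsig (c' k)) σ := by
    intro k σ
    exact gencore M (Bsig c) (Bsig (c' k)) (q k) (hq1 k) (hqM k)
      (key k).1 (key k).2.1 (key k).2.2.1 (key k).2.2.2.1 σ
  -- the bijection
  let G : (Σ k : Fin n, {σ : Equiv.Perm (Fin (M + 1)) // Sat M (Bsig (c' k)) σ}) →
      {τ : Equiv.Perm (Fin (M + 1 + 1)) // Sat (M + 1) (Bsig c) τ} :=
    fun x => ⟨ins ⟨q x.1, by have := hqM x.1; omega⟩ x.2.1, ((gc x.1 x.2.1).mpr x.2.2).1⟩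
  have clash : ∀ (a b : Fin n) (σa σb : Equiv.Perm (Fin (M + 1))),
      Sat M (Bsig (c' a)) σa → Sat M (Bsig (c' b)) σb →
      a.val % 2 = 0 → ¬ b.val % 2 = 0 → q a = q b → q a < M + 1 →
      ins ⟨q a, by have := hqM a; omega⟩ σa = ins ⟨q b, by have := hqM b; omega⟩ σb → False := by
    intro a b σa σb hσa hσb ha hb hab hlt hτeq
    have hfin : (⟨q b, by have := hqM b; omega⟩ : Fin (M + 1 + 1))
        = ⟨q a, by have := hqM a; omega⟩ := Fin.ext (by simp [hab])
    rw [hfin] at hτeq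
    have hσeq : σa = σb := ins_injective _ hτeq
    have hJa := ((gc a σa).mpr hσa).2 hlt
    have hJb := ((gc b σb).mpr hσb).2 (by omega : q b < M + 1)
    rw [if_neg (fun hh => (((key a).2.2.2.2 hlt).mp hh) ha)] at hJa
    rw [if_pos (((key b).2.2.2.2 (by omega)).mpr hb)] at hJb
    rw [← hσeq] at hJb
    exact absurd (lt_transfer σa (by simp; omega) (by simp; omega) hJb) (lt_asymm hJa)
  have hGinj : Function.Injective G := by
    rintro ⟨k, σ, hσ⟩ ⟨k', σ', hσ'⟩ hGeq
    have hτeq : ins ⟨q k, by have := hqM k; omega⟩ σ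
        = ins ⟨q k', by have := hqM k'; omega⟩ σ' := congrArg Subtype.val hGeq
    have hqeq : q k = q k' := by
      have h1 := congrArg (fun e : Equiv.Perm (Fin (M + 1 + 1)) => e.symm (Fin.last (M + 1))) hτeq
      simp only [ins_symm_last] at h1
      exact congrArg Fin.val h1
    by_cases hkk : k = k'
    · subst hkk
      have hσeq : σ = σ' := ins_injective _ hτeq
      subst hσeq
      rfl
    · exfalso
      rcases Nat.lt_or_ge k.val k'.val with hlt | hge
      · obtain ⟨hadj, heven⟩ := qinj k k' hlt hqeq
        have hodd : ¬ k'.val % 2 = 0 := by omega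
        have hqlt : q k < M + 1 := by
          have h5 : q k' = (c.take k'.val).sum := by simp only [hq]; rw [if_neg hodd]
          have h6 := hstrict k'.val n k'.isLt (le_refl n)
          omega
        exact clash k k' σ σ' hσ hσ' heven hodd hqeq hqlt hτeq
      · have hlt' : k'.val < k.val := by
          rcases Nat.lt_or_ge k'.val k.val with h | h
          · exact h
          · exact absurd (Fin.ext (by omega)) hkk
        obtain ⟨hadj, heven⟩ := qinj k' k hlt' hqeq.symm
        have hodd : ¬ k.val % 2 = 0 := by omega
        have hqlt : q k' < M + 1 := by
          have h5 : q k = (c.take k.val).sum := by simp only [hq]; rw [if_neg hodd]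
          have h6 := hstrict k.val n k.isLt (le_refl n)
          omega
        exact clash k' k σ' σ hσ' hσ heven hodd hqeq.symm hqlt hτeq.symm
  have hGsurj : Function.Surjective G := by
    rintro ⟨τ, hτ⟩
    set p : ℕ := (τ.symm (Fin.last (M + 1))).val with hp
    have hpltM2 : p < M + 1 + 1 := (τ.symm (Fin.last (M + 1))).isLt
    have hτp : τ ⟨p, hpltM2⟩ = Fin.last (M + 1) := by
      have h0 : (⟨p, hpltM2⟩ : Fin (M + 1 + 1)) = τ.symm (Fin.last (M + 1)) :=
        Fin.ext hp
      rw [h0, Equiv.apply_symm_apply]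
    have hlastmax : ∀ x : Fin (M + 1 + 1), ¬ Fin.last (M + 1) < x :=
      fun x => not_lt.mpr (Fin.le_last x)
    have hp1 : 1 ≤ p := by
      by_contra hcon
      have h2 := hτ 0 (by omega)
      have hB0 : Bsig c 0 := by
        refine (bsig_iff c (m := 0) (by simp) ?_).mpr rfl
        have : (c.take (0 + 1)).sum = (c.take 1).sum := by norm_num
        omega
      rw [if_pos hB0] at h2
      have h3 : τ ⟨p, hpltM2⟩ < τ ⟨1, by omega⟩ := lt_transfer τ (by simp; omega) (by simp) h2
      rw [hτp] at h3
      exact hlastmax _ h3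
    obtain ⟨m', hm1, hm2⟩ := exists_block c (show p - 1 < c.sum by rw [hM]; omega)
    have hm'n : m' < n := by
      by_contra hcon
      rw [List.take_of_length_le (by omega)] at hm1
      omega
    have hm'even : m' % 2 = 0 := by
      by_contra hodd
      have h2 := hτ (p - 1) (by omega)
      rw [if_neg (fun hh => hodd ((bsig_iff c hm1 hm2).mp hh))] at h2
      have h3 : τ ⟨p, hpltM2⟩ < τ ⟨p - 1, by omega⟩ :=
        lt_transfer τ (by simp; omega) (by simp) h2
      rw [hτp] at h3
      exact hlastmax _ h3
    have hpeak : (c.take (m' + 1)).sum = p := by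
      rcases Nat.lt_or_ge p ((c.take (m' + 1)).sum) with hlt2 | hge2
      · exfalso
        have hplt2 : p < M + 1 := by
          have := take_sum_mono c (show m' + 1 ≤ n by omega)
          omega
        have h2 := hτ p (by omega)
        have hBp : Bsig c p := (bsig_iff c (m := m') (by omega) hlt2).mpr hm'even
        rw [if_pos hBp] at h2
        have h3 : τ ⟨p, hpltM2⟩ < τ ⟨p + 1, by omega⟩ := lt_transfer τ (by simp) (by simp) h2
        rw [hτp] at h3
        exact hlastmax _ h3
      · omega
    -- extract σ
    set pf : Fin (M + 1 + 1) := ⟨p, hpltM2⟩ with hpf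
    set u : Option (Fin (M + 1)) ≃ Option (Fin (M + 1)) :=
      (finSuccEquiv' pf).symm.trans (τ.trans (finSuccEquiv' (Fin.last (M + 1)))) with hu
    have hunone : u none = none := by
      have : u none = finSuccEquiv' (Fin.last (M + 1)) (τ pf) := by
        simp [hu, finSuccEquiv'_symm_none]
      rw [this, show τ pf = Fin.last (M + 1) from hτp, finSuccEquiv'_at]
    set σ : Equiv.Perm (Fin (M + 1)) := u.removeNone with hσdef
    have husome : ∀ j : Fin (M + 1), u (some j) = some (σ j) := by
      intro j
      have hne : u (some j) ≠ none := by
        intro hh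
        have h9 := u.injective (hh.trans hunone.symm)
        simp at h9
      obtain ⟨x, hx⟩ := Option.ne_none_iff_exists'.mp hne
      exact (Equiv.removeNone_some u ⟨x, hx⟩).symm
    have hins : ins pf σ = τ := by
      apply Equiv.ext
      intro x
      by_cases hx : x = pf
      · rw [hx, ins_self, hτp]
      · obtain ⟨j, hj⟩ := Fin.exists_succAbove_eq hx
        rw [← hj, ins_succAbove]
        have h6 : u (some j) = finSuccEquiv' (Fin.last (M + 1)) (τ (pf.succAbove j)) := by
          simp [hu, finSuccEquiv'_symm_some]
        rw [husome j] at h6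
        have h7 := congrArg (finSuccEquiv' (Fin.last (M + 1))).symm h6
        rw [Equiv.symm_apply_apply, finSuccEquiv'_symm_some, Fin.succAbove_last] at h7
        exact h7
    have hτins : Sat (M + 1) (Bsig c) (ins pf σ) := by rw [hins]; exact hτ
    rcases Nat.lt_or_ge p (M + 1) with hpM | hpM
    · -- interior peak
      have hk1n : m' + 1 < n := by
        by_contra hcon
        have h5 : m' + 1 = n := by omega
        rw [h5, hSn] at hpeak
        omega
      have hne : σ ⟨p - 1, by omega⟩ ≠ σ ⟨p, hpM⟩ := by
        intro hh
        have h9 := σ.injective hh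
        have h10 := congrArg Fin.val h9
        simp at h10
        omega
      rcases lt_or_gt_of_ne hne with hcmp | hcmp
      · -- junction ascent: use the odd block m'+1
        set k : Fin n := ⟨m' + 1, hk1n⟩ with hk
        have hqk : q k = p := by
          simp only [hq, hk]
          rw [if_neg (by simp; omega)]
          exact hpeak
        have hσk : Sat M (Bsig (c' k)) σ := by
          apply (gc k σ).mp
          constructor
          · have e : (⟨q k, by have := hqM k; omega⟩ : Fin (M + 1 + 1)) = pf :=
              Fin.ext (by simp [hqk, hpf])
            rw [e]
            exact hτins
          · intro hqlt
            rw [if_pos (((key k).2.2.2.2 hqlt).mpr (by simp [hk]; omega))]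
            exact lt_transfer σ (by simp [hqk]) (by simp [hqk]) hcmp
        refine ⟨⟨k, σ, hσk⟩, ?_⟩
        apply Subtype.ext
        show ins ⟨q k, by have := hqM k; omega⟩ σ = τ
        have e : (⟨q k, by have := hqM k; omega⟩ : Fin (M + 1 + 1)) = pf :=
          Fin.ext (by simp [hqk, hpf])
        rw [e]
        exact hins
      · -- junction descent: use the even block m'
        set k : Fin n := ⟨m', hm'n⟩ with hk
        have hqk : q k = p := by
          simp only [hq, hk]
          rw [if_pos (by omega)]
          exact hpeak
        have hσk : Sat M (Bsig (c' k)) σ := by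
          apply (gc k σ).mp
          constructor
          · have e : (⟨q k, by have := hqM k; omega⟩ : Fin (M + 1 + 1)) = pf :=
              Fin.ext (by simp [hqk, hpf])
            rw [e]
            exact hτins
          · intro hqlt
            rw [if_neg (fun hh => (((key k).2.2.2.2 hqlt).mp hh) (by simp [hk]; omega))]
            exact lt_transfer σ (by simp [hqk]) (by simp [hqk]) hcmp
        refine ⟨⟨k, σ, hσk⟩, ?_⟩
        apply Subtype.ext
        show ins ⟨q k, by have := hqM k; omega⟩ σ = τ
        have e : (⟨q k, by have := hqM k; omega⟩ : Fin (M + 1 + 1)) = pf :=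
          Fin.ext (by simp [hqk, hpf])
        rw [e]
        exact hins
    · -- p = M + 1 : final peak, even block m'
      set k : Fin n := ⟨m', hm'n⟩ with hk
      have hqk : q k = p := by
        simp only [hq, hk]
        rw [if_pos (by omega)]
        exact hpeak
      have hσk : Sat M (Bsig (c' k)) σ := by
        apply (gc k σ).mp
        constructor
        · have e : (⟨q k, by have := hqM k; omega⟩ : Fin (M + 1 + 1)) = pf :=
            Fin.ext (by simp [hqk, hpf])
          rw [e]
          exact hτins
        · intro hqlt
          exfalso
          rw [hqk] at hqlt
          omega
      refine ⟨⟨k, σ, hσk⟩, ?_⟩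
      apply Subtype.ext
      show ins ⟨q k, by have := hqM k; omega⟩ σ = τ
      have e : (⟨q k, by have := hqM k; omega⟩ : Fin (M + 1 + 1)) = pf :=
        Fin.ext (by simp [hqk, hpf])
      rw [e]
      exact hins
  have hbij : Function.Bijective G := ⟨hGinj, hGsurj⟩
  calc Cnt (M + 1) (Bsig c)
      = Nat.card (Σ k : Fin n, {σ : Equiv.Perm (Fin (M + 1)) // Sat M (Bsig (c' k)) σ}) :=
        (Nat.card_congr (Equiv.ofBijective G hbij)).symm
    _ = ∑ k : Fin n, Nat.card {σ : Equiv.Perm (Fin (M + 1)) // Sat M (Bsig (c' k)) σ} :=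
        nat_card_sigma _
    _ = ∑ k : Fin n, Cnt M (Bsig (c' k)) := rfl

end Main

theorem stmt_1 (n : ℕ) (hn : 1 ≤ n) (i : Fin n → ℕ) (hi : ∀ k, 0 < i k) :
    Omega (List.ofFn i) =
      ∑ k : Fin n, Omega (List.ofFn (Function.update i k (i k - 1))) := by
  classical
  have hsum : (List.ofFn i).sum = ∑ k : Fin n, i k := List.sum_ofFn
  have hpos : 1 ≤ (List.ofFn i).sum := by
    rw [hsum]
    calc 1 ≤ i ⟨0, hn⟩ := hi _
    _ ≤ ∑ k : Fin n, i k :=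
      Finset.single_le_sum (fun _ _ => Nat.zero_le _) (Finset.mem_univ _)
  have hM : (List.ofFn i).sum = ((List.ofFn i).sum - 1) + 1 := by omega
  have h2 : ∀ k : Fin n,
      (List.ofFn (Function.update i k (i k - 1))).sum = (List.ofFn i).sum - 1 := by
    intro k
    rw [List.sum_ofFn, Finset.sum_update_of_mem (Finset.mem_univ k)]
    have h3 : ∑ x : Fin n, i x = i k + ∑ x ∈ Finset.univ \ {k}, i x :=
      Finset.sum_eq_add_sum_sdiff_singleton_of_mem (Finset.mem_univ k) i
    have h4 := hi k
    omega
  rw [omega_eq_cnt, hM, main_count ((List.ofFn i).sum - 1) n hn i hi hM]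
  apply Finset.sum_congr rfl
  intro k _
  rw [omega_eq_cnt, h2 k]
end

section
/- For any m ∈ ℕ and any a₁,…,a_m ∈ ℕ with N := a₁+⋯+a_m, one has Ω(a₁,…,a_m) ≤ N!/(a₁!·a₂!⋯a_m!), the multinomial coefficient. -/
namespace Stmt2Aux

open Finset

variable {T n : ℕ}

/-- `τ` restricted to the low positions `0, …, n`. -/
def low (h : n ≤ T) (τ : Equiv.Perm (Fin (T + 1))) (j : Fin (n + 1)) : Fin (T + 1) :=
  τ ⟨j.val, by omega⟩

lemma low_inj (h : n ≤ T) (τ : Equiv.Perm (Fin (T + 1))) : Function.Injective (low h τ) := by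
  intro i j hij
  have H := τ.injective hij
  have : i.val = j.val := by simpa using congrArg Fin.val H
  exact Fin.ext this

/-- The set of values of `τ` on low positions. -/
def Cset (h : n ≤ T) (τ : Equiv.Perm (Fin (T + 1))) : Finset (Fin (T + 1)) :=
  Finset.image (low h τ) Finset.univ

lemma card_Cset (h : n ≤ T) (τ : Equiv.Perm (Fin (T + 1))) : (Cset h τ).card = n + 1 := by
  rw [Cset, Finset.card_image_of_injective _ (low_inj h τ), Finset.card_univ, Fintype.card_fin]

lemma mem_Cset (h : n ≤ T) (τ : Equiv.Perm (Fin (T + 1))) (j : Fin (n + 1)) :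
    low h τ j ∈ Cset h τ := Finset.mem_image_of_mem _ (Finset.mem_univ j)

/-- The collapsed permutation on the low positions. -/
noncomputable def lowPerm (h : n ≤ T) (τ : Equiv.Perm (Fin (T + 1))) :
    Equiv.Perm (Fin (n + 1)) :=
  Equiv.ofBijective
    (fun j => ((Cset h τ).orderIsoOfFin (card_Cset h τ)).symm ⟨low h τ j, mem_Cset h τ j⟩)
    (Finite.injective_iff_bijective.mp (by
      intro i j hij
      have := ((Cset h τ).orderIsoOfFin (card_Cset h τ)).symm.injective hij
      exact low_inj h τ (Subtype.ext_iff.mp this)))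

lemma lowPerm_lt_iff (h : n ≤ T) (τ : Equiv.Perm (Fin (T + 1))) (i j : Fin (n + 1)) :
    lowPerm h τ i < lowPerm h τ j ↔ low h τ i < low h τ j := by
  simp only [lowPerm, Equiv.ofBijective_apply]
  rw [OrderIso.lt_iff_lt]
  exact Subtype.mk_lt_mk

lemma low_eq_emb (h : n ≤ T) (τ : Equiv.Perm (Fin (T + 1))) (j : Fin (n + 1)) :
    low h τ j = (Cset h τ).orderEmbOfFin (card_Cset h τ) (lowPerm h τ j) := by
  rw [← Finset.coe_orderIsoOfFin_apply]
  simp [lowPerm]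

/-- The complement: values of `τ` on high positions. -/
def Sset (h : n ≤ T) (τ : Equiv.Perm (Fin (T + 1))) : Finset (Fin (T + 1)) :=
  (Cset h τ)ᶜ

lemma card_Sset (h : n ≤ T) (τ : Equiv.Perm (Fin (T + 1))) : (Sset h τ).card = T - n := by
  rw [Sset, Finset.card_compl, card_Cset]
  simp

lemma mem_Sset (h : n ≤ T) (τ : Equiv.Perm (Fin (T + 1))) (v : Fin (T + 1)) :
    v ∈ Sset h τ ↔ ∀ j : Fin (n + 1), low h τ j ≠ v := by
  simp [Sset, Cset]

lemma exists_of_mem_Sset (h : n ≤ T) (τ : Equiv.Perm (Fin (T + 1))) {v : Fin (T + 1)}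
    (hv : v ∈ Sset h τ) :
    ∃ i : ℕ, i < T - n ∧ ∃ hi : n + 1 + i < T + 1, v = τ ⟨n + 1 + i, hi⟩ := by
  have hpv : τ (τ.symm v) = v := τ.apply_symm_apply v
  by_cases hpn : (τ.symm v).val ≤ n
  · exfalso
    refine (mem_Sset h τ v).mp hv ⟨(τ.symm v).val, by omega⟩ ?_
    show τ ⟨(τ.symm v).val, _⟩ = v
    rw [show (⟨(τ.symm v).val, by omega⟩ : Fin (T + 1)) = τ.symm v from Fin.ext rfl, hpv]
  · have hlt := (τ.symm v).isLt
    refine ⟨(τ.symm v).val - n - 1, by omega, by omega, ?_⟩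
    have heq : (⟨n + 1 + ((τ.symm v).val - n - 1), by omega⟩ : Fin (T + 1)) = τ.symm v :=
      Fin.ext (by simp; omega)
    rw [heq, hpv]

/-- Shrinking a set avoiding `0` into `Fin M`. -/
def shrink1 {M : ℕ} (S : Finset (Fin (M + 1))) (h0 : ∀ v ∈ S, v.val ≠ 0) : Finset (Fin M) :=
  S.attach.image fun x => ⟨x.1.val - 1, by
    have h1 := h0 x.1 x.2; have h2 := x.1.isLt; omega⟩

lemma card_shrink1 {M : ℕ} (S : Finset (Fin (M + 1))) (h0 : ∀ v ∈ S, v.val ≠ 0) :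
    (shrink1 S h0).card = S.card := by
  rw [shrink1, Finset.card_image_of_injective _ ?_, Finset.card_attach]
  intro x y hxy
  have hx := h0 x.1 x.2; have hy := h0 y.1 y.2
  have : x.1.val - 1 = y.1.val - 1 := congrArg Fin.val hxy
  exact Subtype.ext (Fin.ext (by omega))

lemma mem_shrink1 {M : ℕ} {S : Finset (Fin (M + 1))} {h0 : ∀ v ∈ S, v.val ≠ 0} (w : Fin M) :
    w ∈ shrink1 S h0 ↔ ∃ v ∈ S, (v : ℕ) = w.val + 1 := by
  simp only [shrink1, Finset.mem_image, Finset.mem_attach, true_and, Subtype.exists]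
  constructor
  · rintro ⟨v, hv, heq⟩
    refine ⟨v, hv, ?_⟩
    have hvw := congrArg Fin.val heq
    have hv0 := h0 v hv
    simp at hvw
    omega
  · rintro ⟨v, hv, hval⟩
    refine ⟨v, hv, Fin.ext ?_⟩
    show v.val - 1 = w.val
    omega

lemma shrink1_injective {M : ℕ} {S S' : Finset (Fin (M + 1))}
    (h0 : ∀ v ∈ S, v.val ≠ 0) (h0' : ∀ v ∈ S', v.val ≠ 0)
    (hE : shrink1 S h0 = shrink1 S' h0') : S = S' := by
  have key : ∀ (A B : Finset (Fin (M + 1))) (hA : ∀ v ∈ A, v.val ≠ 0)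
      (hB : ∀ v ∈ B, v.val ≠ 0), shrink1 A hA = shrink1 B hB → ∀ v ∈ A, v ∈ B := by
    intro A B hA hB hAB v hv
    have h1 := hA v hv
    have h2 := v.isLt
    have hw : (⟨v.val - 1, by omega⟩ : Fin M) ∈ shrink1 A hA :=
      (mem_shrink1 _).mpr ⟨v, hv, by simp; omega⟩
    rw [hAB] at hw
    obtain ⟨v', hv', hval⟩ := (mem_shrink1 _).mp hw
    have : v' = v := Fin.ext (by simp at hval ⊢; omega)
    exact this ▸ hv'
  exact Finset.Subset.antisymm (fun v hv => key S S' h0 h0' hE v hv)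
    (fun v hv => key S' S h0' h0 hE.symm v hv)

/-- Shrinking a set avoiding the top element `M` into `Fin M`. -/
def shrink2 {M : ℕ} (S : Finset (Fin (M + 1))) (h0 : ∀ v ∈ S, v.val ≠ M) : Finset (Fin M) :=
  S.attach.image fun x => ⟨x.1.val, by
    have h1 := h0 x.1 x.2; have h2 := x.1.isLt; omega⟩

lemma card_shrink2 {M : ℕ} (S : Finset (Fin (M + 1))) (h0 : ∀ v ∈ S, v.val ≠ M) :
    (shrink2 S h0).card = S.card := by
  rw [shrink2, Finset.card_image_of_injective _ ?_, Finset.card_attach]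
  intro x y hxy
  have : x.1.val = y.1.val := by simpa using congrArg Fin.val hxy
  exact Subtype.ext (Fin.ext this)

lemma mem_shrink2 {M : ℕ} {S : Finset (Fin (M + 1))} {h0 : ∀ v ∈ S, v.val ≠ M} (w : Fin M) :
    w ∈ shrink2 S h0 ↔ ∃ v ∈ S, (v : ℕ) = w.val := by
  simp only [shrink2, Finset.mem_image, Finset.mem_attach, true_and, Subtype.exists]
  constructor
  · rintro ⟨v, hv, heq⟩
    refine ⟨v, hv, ?_⟩
    simpa using congrArg Fin.val heq
  · rintro ⟨v, hv, hval⟩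
    exact ⟨v, hv, Fin.ext hval⟩

lemma shrink2_injective {M : ℕ} {S S' : Finset (Fin (M + 1))}
    (h0 : ∀ v ∈ S, v.val ≠ M) (h0' : ∀ v ∈ S', v.val ≠ M)
    (hE : shrink2 S h0 = shrink2 S' h0') : S = S' := by
  have key : ∀ (A B : Finset (Fin (M + 1))) (hA : ∀ v ∈ A, v.val ≠ M)
      (hB : ∀ v ∈ B, v.val ≠ M), shrink2 A hA = shrink2 B hB → ∀ v ∈ A, v ∈ B := by
    intro A B hA hB hAB v hv
    have h1 := hA v hv
    have h2 := v.isLt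
    have hw : (⟨v.val, by omega⟩ : Fin M) ∈ shrink2 A hA :=
      (mem_shrink2 _).mpr ⟨v, hv, rfl⟩
    rw [hAB] at hw
    obtain ⟨v', hv', hval⟩ := (mem_shrink2 _).mp hw
    have : v' = v := Fin.ext hval
    exact this ▸ hv'
  exact Finset.Subset.antisymm (fun v hv => key S S' h0 h0' hE v hv)
    (fun v hv => key S' S h0' h0 hE.symm v hv)

lemma orderEmbOfFin_congr {α : Type*} [LinearOrder α] {s t : Finset α} {k : ℕ}
    (hst : s = t) (hs : s.card = k) (ht : t.card = k) (x : Fin k) :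
    s.orderEmbOfFin hs x = t.orderEmbOfFin ht x := by subst hst; rfl

section Blocks

variable (a : List ℕ) (b : ℕ) (τ : Equiv.Perm (Fin ((a ++ [b]).sum + 1)))

lemma sum_app : (a ++ [b]).sum = a.sum + b := by simp

lemma hle : a.sum ≤ (a ++ [b]).sum := by simp

lemma last_adj (hτ : MonotCond (a ++ [b]) τ) (j : ℕ) (hj1 : a.sum ≤ j)
    (hj2 : j + 1 < (a ++ [b]).sum + 1) :
    if a.length % 2 = 0 then τ ⟨j, Nat.lt_of_succ_lt hj2⟩ < τ ⟨j + 1, hj2⟩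
    else τ ⟨j + 1, hj2⟩ < τ ⟨j, Nat.lt_of_succ_lt hj2⟩ := by
  have h1 : (a ++ [b]).take a.length = a := List.take_left
  have h2 : (a ++ [b]).take (a.length + 1) = a ++ [b] :=
    List.take_of_length_le (by simp)
  exact hτ a.length (by simp) j (by rw [h1]; exact hj1)
    (by rw [h2]; omega) hj2

lemma monot_lowPerm (hτ : MonotCond (a ++ [b]) τ) :
    MonotCond a (lowPerm (hle a b) τ) := by
  intro k hk j hj1 hj2 hjlt
  have hk' : k < (a ++ [b]).length := by simp; omega
  have ht1 : (a ++ [b]).take k = a.take k := List.take_append_of_le_length (by omega)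
  have ht2 : (a ++ [b]).take (k + 1) = a.take (k + 1) := List.take_append_of_le_length (by omega)
  have hsum : (a.take (k + 1)).sum ≤ a.sum := by
    conv_rhs => rw [← List.take_append_drop (k + 1) a]
    rw [List.sum_append]
    omega
  have hT := sum_app a b
  have hlt' : j + 1 < (a ++ [b]).sum + 1 := by omega
  have H := hτ k hk' j (by rw [ht1]; exact hj1) (by rw [ht2]; exact hj2) hlt'
  by_cases hk2 : k % 2 = 0
  · rw [if_pos hk2] at H ⊢
    exact (lowPerm_lt_iff (hle a b) τ _ _).mpr H
  · rw [if_neg hk2] at H ⊢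
    exact (lowPerm_lt_iff (hle a b) τ _ _).mpr H

lemma Sset_ne_bot (hτ : MonotCond (a ++ [b]) τ) (he : a.length % 2 = 0) :
    ∀ v ∈ Sset (hle a b) τ, v.val ≠ 0 := by
  intro v hv h0
  have hT := sum_app a b
  obtain ⟨i, hi, hlt, hveq⟩ := exists_of_mem_Sset (hle a b) τ hv
  have hadj := last_adj a b τ hτ (a.sum + i) (by omega) (by omega)
  rw [if_pos he] at hadj
  have heq : (⟨a.sum + i + 1, by omega⟩ : Fin ((a ++ [b]).sum + 1)) = ⟨a.sum + 1 + i, hlt⟩ :=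
    by simp only [Fin.mk.injEq]; omega
  rw [heq, ← hveq] at hadj
  have := (Fin.lt_def).mp hadj
  omega

lemma Sset_ne_top (hτ : MonotCond (a ++ [b]) τ) (ho : ¬ a.length % 2 = 0) :
    ∀ v ∈ Sset (hle a b) τ, v.val ≠ (a ++ [b]).sum := by
  intro v hv h0
  have hT := sum_app a b
  obtain ⟨i, hi, hlt, hveq⟩ := exists_of_mem_Sset (hle a b) τ hv
  have hadj := last_adj a b τ hτ (a.sum + i) (by omega) (by omega)
  rw [if_neg ho] at hadj
  have heq : (⟨a.sum + i + 1, by omega⟩ : Fin ((a ++ [b]).sum + 1)) = ⟨a.sum + 1 + i, hlt⟩ :=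
    by simp only [Fin.mk.injEq]; omega
  rw [heq, ← hveq] at hadj
  have h1 := (Fin.lt_def).mp hadj
  have h2 := (τ ⟨a.sum + i, by omega⟩).isLt
  omega

/-- The values of `τ` on the last block, as a function of the offset. -/
def lastFun (i : Fin b) : Fin ((a ++ [b]).sum + 1) :=
  τ ⟨a.sum + 1 + i.val, by have := sum_app a b; have := i.isLt; omega⟩

lemma lastFun_mem (i : Fin b) :
    lastFun a b τ i ∈ Sset (hle a b) τ := by
  rw [mem_Sset]
  intro j hj
  have := τ.injective hj
  have := congrArg Fin.val this
  simp only [low] at this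
  have hj2 := j.isLt
  omega

lemma chain_lt (hτ : MonotCond (a ++ [b]) τ) (he : a.length % 2 = 0) :
    ∀ (d p : ℕ), a.sum ≤ p → ∀ hq : p + d < (a ++ [b]).sum + 1, 0 < d →
      τ ⟨p, by omega⟩ < τ ⟨p + d, hq⟩ := by
  intro d
  induction d with
  | zero => intro p _ _ h; omega
  | succ d ih =>
    intro p hp hq _
    have hadj := last_adj a b τ hτ (p + d) (by omega) (by omega)
    rw [if_pos he] at hadj
    rcases Nat.eq_zero_or_pos d with hd | hd
    · subst hd
      simpa using hadj
    · exact lt_trans (ih p hp (by omega) hd) hadj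

lemma chain_gt (hτ : MonotCond (a ++ [b]) τ) (ho : ¬ a.length % 2 = 0) :
    ∀ (d p : ℕ), a.sum ≤ p → ∀ hq : p + d < (a ++ [b]).sum + 1, 0 < d →
      τ ⟨p + d, hq⟩ < τ ⟨p, by omega⟩ := by
  intro d
  induction d with
  | zero => intro p _ _ h; omega
  | succ d ih =>
    intro p hp hq _
    have hadj := last_adj a b τ hτ (p + d) (by omega) (by omega)
    rw [if_neg ho] at hadj
    rcases Nat.eq_zero_or_pos d with hd | hd
    · subst hd
      simpa using hadj
    · exact lt_trans hadj (ih p hp (by omega) hd)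

lemma lastFun_strictMono (hτ : MonotCond (a ++ [b]) τ) (he : a.length % 2 = 0) :
    StrictMono (lastFun a b τ) := by
  intro p q hpq
  have hT := sum_app a b
  have hp := p.isLt
  have hq := q.isLt
  have hpq' : p.val < q.val := hpq
  have H := chain_lt a b τ hτ he (q.val - p.val) (a.sum + 1 + p.val) (by omega)
    (by omega) (by omega)
  have heq : (⟨a.sum + 1 + p.val + (q.val - p.val), by omega⟩ : Fin ((a ++ [b]).sum + 1))
      = ⟨a.sum + 1 + q.val, by omega⟩ := by simp only [Fin.mk.injEq]; omega
  rw [heq] at H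
  exact H

lemma lastFun_rev_strictMono (hτ : MonotCond (a ++ [b]) τ) (ho : ¬ a.length % 2 = 0) :
    StrictMono (fun i : Fin b => lastFun a b τ i.rev) := by
  intro p q hpq
  have hT := sum_app a b
  have hp := p.isLt
  have hq := q.isLt
  have hpq' : p.val < q.val := hpq
  have hrev : q.rev.val < p.rev.val := by
    simp [Fin.rev]
    omega
  have H := chain_gt a b τ hτ ho (p.rev.val - q.rev.val) (a.sum + 1 + q.rev.val) (by
      have := q.rev.isLt; omega)
    (by have := p.rev.isLt; omega) (by omega)
  have heq : (⟨a.sum + 1 + q.rev.val + (p.rev.val - q.rev.val), by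
        have := p.rev.isLt; omega⟩ : Fin ((a ++ [b]).sum + 1))
      = ⟨a.sum + 1 + p.rev.val, by have := p.rev.isLt; omega⟩ := by simp only [Fin.mk.injEq]; omega
  rw [heq] at H
  exact H

end Blocks

lemma key (a : List ℕ) (b : ℕ) : Omega (a ++ [b]) ≤ Omega a * ((a.sum + b).choose b) := by
  classical
  have hT : (a ++ [b]).sum = a.sum + b := sum_app a b
  have hSb : ∀ τ : Equiv.Perm (Fin ((a ++ [b]).sum + 1)),
      (Sset (hle a b) τ).card = b := by
    intro τ; rw [card_Sset]; omega
  by_cases he : a.length % 2 = 0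
  · -- even case: values in the last block avoid 0
    set F : {τ : Equiv.Perm (Fin ((a ++ [b]).sum + 1)) // MonotCond (a ++ [b]) τ} →
        ({σ : Equiv.Perm (Fin (a.sum + 1)) // MonotCond a σ} ×
         {S : Finset (Fin ((a ++ [b]).sum)) // S.card = b}) := fun τ =>
      (⟨lowPerm (hle a b) τ.1, monot_lowPerm a b τ.1 τ.2⟩,
       ⟨shrink1 (Sset (hle a b) τ.1) (Sset_ne_bot a b τ.1 τ.2 he),
        by rw [card_shrink1, hSb]⟩) with hF
    have hFinj : Function.Injective F := by
      intro τ σ hτσ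
      have h1 : lowPerm (hle a b) τ.1 = lowPerm (hle a b) σ.1 :=
        Subtype.ext_iff.mp (congrArg Prod.fst hτσ)
      have h2 : shrink1 (Sset (hle a b) τ.1) (Sset_ne_bot a b τ.1 τ.2 he)
          = shrink1 (Sset (hle a b) σ.1) (Sset_ne_bot a b σ.1 σ.2 he) :=
        Subtype.ext_iff.mp (congrArg Prod.snd hτσ)
      have hS : Sset (hle a b) τ.1 = Sset (hle a b) σ.1 := shrink1_injective _ _ h2
      have hC : Cset (hle a b) τ.1 = Cset (hle a b) σ.1 := by
        have := congrArg (·ᶜ) hS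
        simpa [Sset, compl_compl] using this
      apply Subtype.ext
      apply Equiv.ext
      intro p
      by_cases hp : p.val ≤ a.sum
      · -- low position
        have hjp : p.val < a.sum + 1 := by omega
        have e1 := low_eq_emb (hle a b) τ.1 ⟨p.val, hjp⟩
        have e2 := low_eq_emb (hle a b) σ.1 ⟨p.val, hjp⟩
        have hpe : (⟨p.val, by omega⟩ : Fin ((a ++ [b]).sum + 1)) = p := Fin.ext rfl
        have : low (hle a b) τ.1 ⟨p.val, hjp⟩ = low (hle a b) σ.1 ⟨p.val, hjp⟩ := by
          rw [e1, e2, h1]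
          exact orderEmbOfFin_congr hC _ _ _
        simpa [low, hpe] using this
      · -- high position
        have hplt := p.isLt
        have hib : p.val - a.sum - 1 < b := by omega
        have hτu := Finset.orderEmbOfFin_unique (hSb τ.1)
          (lastFun_mem a b τ.1) (lastFun_strictMono a b τ.1 τ.2 he)
        have hσu := Finset.orderEmbOfFin_unique (hSb σ.1)
          (lastFun_mem a b σ.1) (lastFun_strictMono a b σ.1 σ.2 he)
        have hpe : (⟨a.sum + 1 + (p.val - a.sum - 1), by omega⟩ :
            Fin ((a ++ [b]).sum + 1)) = p := Fin.ext (by simp; omega)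
        have e1 : τ.1 p = lastFun a b τ.1 ⟨p.val - a.sum - 1, hib⟩ := by
          rw [lastFun, hpe]
        have e2 : σ.1 p = lastFun a b σ.1 ⟨p.val - a.sum - 1, hib⟩ := by
          rw [lastFun, hpe]
        rw [e1, e2, congrFun hτu _, congrFun hσu _]
        exact orderEmbOfFin_congr hS _ _ _
    calc Omega (a ++ [b]) ≤ Nat.card ({σ : Equiv.Perm (Fin (a.sum + 1)) // MonotCond a σ} ×
          {S : Finset (Fin ((a ++ [b]).sum)) // S.card = b}) :=
        Nat.card_le_card_of_injective F hFinj
      _ = Omega a * Nat.card {S : Finset (Fin ((a ++ [b]).sum)) // S.card = b} := by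
        rw [Nat.card_prod]; rfl
      _ = Omega a * ((a.sum + b).choose b) := by
        rw [Nat.card_eq_fintype_card, Fintype.card_finset_len, Fintype.card_fin, hT]
  · -- odd case: values in the last block avoid the top
    set F : {τ : Equiv.Perm (Fin ((a ++ [b]).sum + 1)) // MonotCond (a ++ [b]) τ} →
        ({σ : Equiv.Perm (Fin (a.sum + 1)) // MonotCond a σ} ×
         {S : Finset (Fin ((a ++ [b]).sum)) // S.card = b}) := fun τ =>
      (⟨lowPerm (hle a b) τ.1, monot_lowPerm a b τ.1 τ.2⟩,
       ⟨shrink2 (Sset (hle a b) τ.1) (Sset_ne_top a b τ.1 τ.2 he),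
        by rw [card_shrink2, hSb]⟩) with hF
    have hFinj : Function.Injective F := by
      intro τ σ hτσ
      have h1 : lowPerm (hle a b) τ.1 = lowPerm (hle a b) σ.1 :=
        Subtype.ext_iff.mp (congrArg Prod.fst hτσ)
      have h2 : shrink2 (Sset (hle a b) τ.1) (Sset_ne_top a b τ.1 τ.2 he)
          = shrink2 (Sset (hle a b) σ.1) (Sset_ne_top a b σ.1 σ.2 he) :=
        Subtype.ext_iff.mp (congrArg Prod.snd hτσ)
      have hS : Sset (hle a b) τ.1 = Sset (hle a b) σ.1 := shrink2_injective _ _ h2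
      have hC : Cset (hle a b) τ.1 = Cset (hle a b) σ.1 := by
        have := congrArg (·ᶜ) hS
        simpa [Sset, compl_compl] using this
      apply Subtype.ext
      apply Equiv.ext
      intro p
      by_cases hp : p.val ≤ a.sum
      · have hjp : p.val < a.sum + 1 := by omega
        have e1 := low_eq_emb (hle a b) τ.1 ⟨p.val, hjp⟩
        have e2 := low_eq_emb (hle a b) σ.1 ⟨p.val, hjp⟩
        have hpe : (⟨p.val, by omega⟩ : Fin ((a ++ [b]).sum + 1)) = p := Fin.ext rfl
        have : low (hle a b) τ.1 ⟨p.val, hjp⟩ = low (hle a b) σ.1 ⟨p.val, hjp⟩ := by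
          rw [e1, e2, h1]
          exact orderEmbOfFin_congr hC _ _ _
        simpa [low, hpe] using this
      · have hplt := p.isLt
        have hib : p.val - a.sum - 1 < b := by omega
        have hτu := Finset.orderEmbOfFin_unique (hSb τ.1)
          (fun i => lastFun_mem a b τ.1 i.rev) (lastFun_rev_strictMono a b τ.1 τ.2 he)
        have hσu := Finset.orderEmbOfFin_unique (hSb σ.1)
          (fun i => lastFun_mem a b σ.1 i.rev) (lastFun_rev_strictMono a b σ.1 σ.2 he)
        have hpe : (⟨a.sum + 1 + (p.val - a.sum - 1), by omega⟩ :
            Fin ((a ++ [b]).sum + 1)) = p := Fin.ext (by simp; omega)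
        set i : Fin b := ⟨p.val - a.sum - 1, hib⟩ with hi
        have e1 : τ.1 p = lastFun a b τ.1 i := by rw [lastFun, hpe]
        have e2 : σ.1 p = lastFun a b σ.1 i := by rw [lastFun, hpe]
        have hrr : i.rev.rev = i := Fin.rev_rev i
        have ht' := congrFun hτu i.rev
        have hs' := congrFun hσu i.rev
        simp only [hrr] at ht' hs'
        rw [e1, e2, ht', hs']
        exact orderEmbOfFin_congr hS _ _ _
    calc Omega (a ++ [b]) ≤ Nat.card ({σ : Equiv.Perm (Fin (a.sum + 1)) // MonotCond a σ} ×
          {S : Finset (Fin ((a ++ [b]).sum)) // S.card = b}) :=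
        Nat.card_le_card_of_injective F hFinj
      _ = Omega a * Nat.card {S : Finset (Fin ((a ++ [b]).sum)) // S.card = b} := by
        rw [Nat.card_prod]; rfl
      _ = Omega a * ((a.sum + b).choose b) := by
        rw [Nat.card_eq_fintype_card, Fintype.card_finset_len, Fintype.card_fin, hT]

lemma omega_nil : Omega ([] : List ℕ) ≤ 1 := by
  have h1 : Nat.card (Equiv.Perm (Fin (([] : List ℕ).sum + 1))) = 1 := by
    rw [Nat.card_eq_fintype_card]
    simp [Fintype.card_perm]
  calc Omega [] ≤ Nat.card (Equiv.Perm (Fin (([] : List ℕ).sum + 1))) :=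
      Nat.card_le_card_of_injective Subtype.val Subtype.val_injective
    _ = 1 := h1

lemma main_aux (a : List ℕ) :
    Omega a * (a.map Nat.factorial).prod ≤ (a.sum).factorial := by
  induction a using List.reverseRecOn with
  | nil => simpa using omega_nil
  | append_singleton a b ih =>
    have hkey := key a b
    have hmap : ((a ++ [b]).map Nat.factorial).prod
        = (a.map Nat.factorial).prod * b.factorial := by simp
    have hsum : (a ++ [b]).sum = a.sum + b := by simp
    rw [hmap, hsum]
    calc Omega (a ++ [b]) * ((a.map Nat.factorial).prod * b.factorial)
        ≤ (Omega a * ((a.sum + b).choose b)) * ((a.map Nat.factorial).prod * b.factorial) :=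
        Nat.mul_le_mul_right _ hkey
      _ = (Omega a * (a.map Nat.factorial).prod) * ((a.sum + b).choose b * b.factorial) := by
        ring
      _ ≤ (a.sum).factorial * ((a.sum + b).choose b * b.factorial) :=
        Nat.mul_le_mul_right _ ih
      _ = (a.sum + b).choose b * b.factorial * (a.sum + b - b).factorial := by
        rw [show a.sum + b - b = a.sum by omega]; ring
      _ = (a.sum + b).factorial :=
        Nat.choose_mul_factorial_mul_factorial (Nat.le_add_left b a.sum)

end Stmt2Aux

theorem stmt_2 (a : List ℕ) :
    Omega a ≤ Nat.multinomial Finset.univ a.get := by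
  have hprodpos : 0 < ∏ i : Fin a.length, (a.get i).factorial :=
    Finset.prod_pos (fun i _ => Nat.factorial_pos _)
  have h1 : (∏ i : Fin a.length, Nat.factorial (a.get i)) = (a.map Nat.factorial).prod := by
    simpa [List.get_eq_getElem] using Fin.prod_univ_get' a Nat.factorial
  have h2 : (∑ i : Fin a.length, a.get i) = a.sum := by
    simpa [List.get_eq_getElem] using Fin.sum_univ_get a
  show Omega a ≤ (∑ i : Fin a.length, a.get i).factorial / ∏ i : Fin a.length, (a.get i).factorial
  rw [Nat.le_div_iff_mul_le hprodpos, h1, h2]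
  exact Stmt2Aux.main_aux a
end

section
/- For any n ∈ ℕ, n ≥ 1, and any real numbers x₁,…,xₙ with |x₁| + ⋯ + |xₙ| < 1, the family (Ω(i₁,…,iₙ)·x₁^{i₁}⋯xₙ^{iₙ}) indexed by (i₁,…,iₙ) ∈ ℕⁿ is absolutely summable (i.e., the multiple power series F_n(x₁,…,xₙ) = Σ_{i₁,…,iₙ ≥ 0} Ω(i₁,…,iₙ) x₁^{i₁}⋯xₙ^{iₙ} converges absolutely). -/
open Finset

/-- `MonotCond` with a parity shift `p`. -/
def MC (p : ℕ) (a : List ℕ) (τ : Equiv.Perm (Fin (a.sum + 1))) : Prop :=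
  ∀ k, k < a.length →
    ∀ j, (a.take k).sum ≤ j → j < (a.take (k + 1)).sum →
      ∀ h : j + 1 < a.sum + 1,
        if (k + p) % 2 = 0
        then τ ⟨j, Nat.lt_of_succ_lt h⟩ < τ ⟨j + 1, h⟩
        else τ ⟨j + 1, h⟩ < τ ⟨j, Nat.lt_of_succ_lt h⟩

lemma monotCond_iff (a : List ℕ) (τ : Equiv.Perm (Fin (a.sum + 1))) :
    MonotCond a τ ↔ MC 0 a τ := by
  simp [MonotCond, MC]

section Rec

variable {a₀ : ℕ} {rest : List ℕ}

private lemma sum_cons_eq : (a₀ :: rest).sum = a₀ + rest.sum := by simp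

/-- values of `τ` on the head block positions -/
def headFun (τ : Equiv.Perm (Fin ((a₀ :: rest).sum + 1))) (t : Fin a₀) :
    Fin ((a₀ :: rest).sum + 1) :=
  τ ⟨t, by have h1 := t.isLt; have h2 : (a₀ :: rest).sum = a₀ + rest.sum := List.sum_cons; omega⟩

def headSet (τ : Equiv.Perm (Fin ((a₀ :: rest).sum + 1))) : Finset (Fin ((a₀ :: rest).sum + 1)) :=
  Finset.image (headFun τ) Finset.univ

lemma headFun_injective (τ : Equiv.Perm (Fin ((a₀ :: rest).sum + 1))) :
    Function.Injective (headFun τ) := by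
  intro t t' h
  have := τ.injective h
  simp only [Fin.mk.injEq] at this
  exact Fin.ext this

lemma card_headSet (τ : Equiv.Perm (Fin ((a₀ :: rest).sum + 1))) :
    (headSet τ).card = a₀ := by
  rw [headSet, Finset.card_image_of_injective _ (headFun_injective τ), Finset.card_univ,
    Fintype.card_fin]

/-- values of `τ` on the tail positions -/
def tailFun (τ : Equiv.Perm (Fin ((a₀ :: rest).sum + 1))) (j : Fin (rest.sum + 1)) :
    Fin ((a₀ :: rest).sum + 1) :=
  τ ⟨a₀ + j, by have h1 := j.isLt; have h2 : (a₀ :: rest).sum = a₀ + rest.sum := List.sum_cons; omega⟩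

lemma tailFun_injective (τ : Equiv.Perm (Fin ((a₀ :: rest).sum + 1))) :
    Function.Injective (tailFun τ) := by
  intro t t' h
  have := congrArg Fin.val (τ.injective h)
  simp only at this
  exact Fin.ext (by omega)

def tailSet (τ : Equiv.Perm (Fin ((a₀ :: rest).sum + 1))) : Finset (Fin ((a₀ :: rest).sum + 1)) :=
  Finset.image (tailFun τ) Finset.univ

lemma card_tailSet (τ : Equiv.Perm (Fin ((a₀ :: rest).sum + 1))) :
    (tailSet τ).card = rest.sum + 1 := by
  rw [tailSet, Finset.card_image_of_injective _ (tailFun_injective τ), Finset.card_univ,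
    Fintype.card_fin]

lemma tailSet_eq_compl (τ : Equiv.Perm (Fin ((a₀ :: rest).sum + 1))) :
    tailSet τ = (headSet τ)ᶜ := by
  apply Finset.eq_of_subset_of_card_le
  · intro x hx
    simp only [tailSet, Finset.mem_image, Finset.mem_univ, true_and] at hx
    obtain ⟨j, rfl⟩ := hx
    simp only [Finset.mem_compl, headSet, Finset.mem_image, Finset.mem_univ, true_and]
    rintro ⟨t, ht⟩
    have := congrArg Fin.val (τ.injective ht)
    simp only [headFun, tailFun] at this ⊢
    have h1 := t.isLt
    omega
  · rw [Finset.card_compl, card_tailSet, card_headSet, Fintype.card_fin]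
    have h2 : (a₀ :: rest).sum = a₀ + rest.sum := by simp
    omega

lemma mem_tailSet (τ : Equiv.Perm (Fin ((a₀ :: rest).sum + 1))) (j : Fin (rest.sum + 1)) :
    tailFun τ j ∈ tailSet τ :=
  Finset.mem_image_of_mem _ (Finset.mem_univ j)

noncomputable def tailPerm (τ : Equiv.Perm (Fin ((a₀ :: rest).sum + 1))) :
    Equiv.Perm (Fin (rest.sum + 1)) :=
  Equiv.ofBijective
    (fun j => ((tailSet τ).orderIsoOfFin (card_tailSet τ)).symm ⟨tailFun τ j, mem_tailSet τ j⟩)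
    (by
      rw [← Finite.injective_iff_bijective]
      intro j j' h
      have h2 := congrArg (((tailSet τ).orderIsoOfFin (card_tailSet τ))) h
      simp only [OrderIso.apply_symm_apply, Subtype.mk.injEq] at h2
      exact tailFun_injective τ h2)

lemma tailPerm_lt_iff (τ : Equiv.Perm (Fin ((a₀ :: rest).sum + 1))) (j j' : Fin (rest.sum + 1)) :
    tailPerm τ j < tailPerm τ j' ↔ tailFun τ j < tailFun τ j' := by
  rw [tailPerm]
  simp only [Equiv.ofBijective_apply]
  rw [OrderIso.lt_iff_lt, Subtype.mk_lt_mk]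

lemma orderEmb_tailPerm (τ : Equiv.Perm (Fin ((a₀ :: rest).sum + 1))) (j : Fin (rest.sum + 1)) :
    (tailSet τ).orderEmbOfFin (card_tailSet τ) (tailPerm τ j) = tailFun τ j := by
  rw [tailPerm]
  simp only [Equiv.ofBijective_apply]
  rw [← Finset.coe_orderIsoOfFin_apply, OrderIso.apply_symm_apply]

end Rec

lemma lt_chain {α : Type*} [Preorder α] {m : ℕ} (f : Fin m → α)
    (hf : ∀ j (h : j + 1 < m), f ⟨j, Nat.lt_of_succ_lt h⟩ < f ⟨j + 1, h⟩) :
    ∀ (s t : ℕ) (hs : s < m) (ht : t < m), s < t → f ⟨s, hs⟩ < f ⟨t, ht⟩ := by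
  intro s t
  induction t with
  | zero => intro _ _ h; omega
  | succ u ih =>
    intro hs ht hst
    rcases Nat.lt_or_ge s u with h | h
    · exact lt_trans (ih hs (by omega) h) (hf u ht)
    · have hsu : s = u := by omega
      subst hsu
      exact hf s ht

section Rec2

variable {a₀ : ℕ} {rest : List ℕ} {p : ℕ}

lemma MC_tailPerm (τ : Equiv.Perm (Fin ((a₀ :: rest).sum + 1)))
    (hτ : MC p (a₀ :: rest) τ) : MC (p + 1) rest (tailPerm τ) := by
  intro k hk j hj1 hj2 h
  have hsum : (a₀ :: rest).sum = a₀ + rest.sum := List.sum_cons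
  have hk' : k + 1 < (a₀ :: rest).length := by simp; omega
  have hb1 : ((a₀ :: rest).take (k + 1)).sum ≤ a₀ + j := by
    rw [List.take_succ_cons, List.sum_cons]; omega
  have hb2 : a₀ + j < ((a₀ :: rest).take (k + 1 + 1)).sum := by
    rw [List.take_succ_cons, List.sum_cons]; omega
  have h' : (a₀ + j) + 1 < (a₀ :: rest).sum + 1 := by omega
  have key := hτ (k + 1) hk' (a₀ + j) hb1 hb2 h'
  have hpar : (k + 1 + p) % 2 = (k + (p + 1)) % 2 := by omega
  rw [hpar] at key
  split_ifs at key ⊢ with h0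
  · rw [tailPerm_lt_iff]; simp only [tailFun]; exact key
  · rw [tailPerm_lt_iff]; simp only [tailFun]; exact key

lemma headFun_strictMono {τ : Equiv.Perm (Fin ((a₀ :: rest).sum + 1))}
    (hτ : MC p (a₀ :: rest) τ) (hp : p % 2 = 0) : StrictMono (headFun τ) := by
  have hsum : (a₀ :: rest).sum = a₀ + rest.sum := List.sum_cons
  have step : ∀ j (hj : j + 1 < a₀),
      headFun τ ⟨j, Nat.lt_of_succ_lt hj⟩ < headFun τ ⟨j + 1, hj⟩ := by
    intro j hj
    have hk : 0 < (a₀ :: rest).length := by simp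
    have hb1 : ((a₀ :: rest).take 0).sum ≤ j := by simp
    have hb2 : j < ((a₀ :: rest).take 1).sum := by
      have : ((a₀ :: rest).take 1).sum = a₀ := by simp
      omega
    have h' : j + 1 < (a₀ :: rest).sum + 1 := by omega
    have key := hτ 0 hk j hb1 hb2 h'
    rw [if_pos (by omega : (0 + p) % 2 = 0)] at key
    simp only [headFun]
    exact key
  intro t t' htt
  exact lt_chain _ step t t' t.isLt t'.isLt htt

lemma headFun_strictAnti {τ : Equiv.Perm (Fin ((a₀ :: rest).sum + 1))}
    (hτ : MC p (a₀ :: rest) τ) (hp : p % 2 = 1) : StrictAnti (headFun τ) := by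
  have hsum : (a₀ :: rest).sum = a₀ + rest.sum := List.sum_cons
  have step : ∀ j (hj : j + 1 < a₀),
      headFun τ ⟨j + 1, hj⟩ < headFun τ ⟨j, Nat.lt_of_succ_lt hj⟩ := by
    intro j hj
    have hk : 0 < (a₀ :: rest).length := by simp
    have hb1 : ((a₀ :: rest).take 0).sum ≤ j := by simp
    have hb2 : j < ((a₀ :: rest).take 1).sum := by
      have : ((a₀ :: rest).take 1).sum = a₀ := by simp
      omega
    have h' : j + 1 < (a₀ :: rest).sum + 1 := by omega
    have key := hτ 0 hk j hb1 hb2 h'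
    rw [if_neg (by omega : ¬ (0 + p) % 2 = 0)] at key
    simp only [headFun]
    exact key
  intro t t' htt
  exact lt_chain (fun s => (OrderDual.toDual (headFun τ s)))
    (fun j hj => step j hj) t t' t.isLt t'.isLt htt

lemma mem_headSet (τ : Equiv.Perm (Fin ((a₀ :: rest).sum + 1))) (t : Fin a₀) :
    headFun τ t ∈ headSet τ :=
  Finset.mem_image_of_mem _ (Finset.mem_univ t)

lemma orderEmbOfFin_congr {α : Type*} [LinearOrder α] {s t : Finset α} {k : ℕ}
    (hs : s.card = k) (ht : t.card = k) (hst : s = t) (m : Fin k) :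
    s.orderEmbOfFin hs m = t.orderEmbOfFin ht m := by subst hst; rfl

lemma headFun_eq {τ₁ τ₂ : Equiv.Perm (Fin ((a₀ :: rest).sum + 1))}
    (h₁ : MC p (a₀ :: rest) τ₁) (h₂ : MC p (a₀ :: rest) τ₂)
    (hA : headSet τ₁ = headSet τ₂) : headFun τ₁ = headFun τ₂ := by
  rcases Nat.mod_two_eq_zero_or_one p with hp | hp
  · have e₁ := Finset.orderEmbOfFin_unique (card_headSet τ₁)
      (fun t => mem_headSet τ₁ t) (headFun_strictMono h₁ hp)
    have e₂ := Finset.orderEmbOfFin_unique (card_headSet τ₂)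
      (fun t => mem_headSet τ₂ t) (headFun_strictMono h₂ hp)
    funext t
    rw [congrFun e₁ t, congrFun e₂ t]
    exact orderEmbOfFin_congr _ _ hA t
  · have m₁ : StrictMono (fun t : Fin a₀ => headFun τ₁ t.rev) := by
      intro t t' h
      exact headFun_strictAnti h₁ hp (Fin.rev_lt_rev.mpr h)
    have m₂ : StrictMono (fun t : Fin a₀ => headFun τ₂ t.rev) := by
      intro t t' h
      exact headFun_strictAnti h₂ hp (Fin.rev_lt_rev.mpr h)
    have e₁ := Finset.orderEmbOfFin_unique (card_headSet τ₁)
      (fun t => mem_headSet τ₁ t.rev) m₁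
    have e₂ := Finset.orderEmbOfFin_unique (card_headSet τ₂)
      (fun t => mem_headSet τ₂ t.rev) m₂
    funext t
    have r₁ := congrFun e₁ t.rev
    have r₂ := congrFun e₂ t.rev
    simp only [Fin.rev_rev] at r₁ r₂
    rw [r₁, r₂]
    exact orderEmbOfFin_congr _ _ hA t.rev

lemma tau_eq {τ₁ τ₂ : Equiv.Perm (Fin ((a₀ :: rest).sum + 1))}
    (h₁ : MC p (a₀ :: rest) τ₁) (h₂ : MC p (a₀ :: rest) τ₂)
    (hA : headSet τ₁ = headSet τ₂) (hσ : tailPerm τ₁ = tailPerm τ₂) : τ₁ = τ₂ := by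
  have hsum : (a₀ :: rest).sum = a₀ + rest.sum := List.sum_cons
  have hT : tailSet τ₁ = tailSet τ₂ := by
    rw [tailSet_eq_compl, tailSet_eq_compl, hA]
  have hHF := headFun_eq h₁ h₂ hA
  apply Equiv.ext
  rintro ⟨v, hv⟩
  by_cases hva : v < a₀
  · exact congrFun hHF ⟨v, hva⟩
  · have hj : v - a₀ < rest.sum + 1 := by omega
    have hx : (⟨v, hv⟩ : Fin ((a₀ :: rest).sum + 1)) =
        ⟨a₀ + (v - a₀), by omega⟩ := Fin.ext (by simp; omega)
    rw [hx]
    show tailFun τ₁ ⟨v - a₀, hj⟩ = tailFun τ₂ ⟨v - a₀, hj⟩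
    rw [← orderEmb_tailPerm, ← orderEmb_tailPerm, hσ]
    exact orderEmbOfFin_congr _ _ hT _

lemma rec_step (p a₀ : ℕ) (rest : List ℕ) :
    Nat.card {τ : Equiv.Perm (Fin ((a₀ :: rest).sum + 1)) // MC p (a₀ :: rest) τ} ≤
      ((a₀ :: rest).sum + 1).choose a₀ *
        Nat.card {σ : Equiv.Perm (Fin (rest.sum + 1)) // MC (p + 1) rest σ} := by
  classical
  set F := fun τs : {τ : Equiv.Perm (Fin ((a₀ :: rest).sum + 1)) // MC p (a₀ :: rest) τ} =>
    ((⟨headSet τs.1, card_headSet τs.1⟩ :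
        {A : Finset (Fin ((a₀ :: rest).sum + 1)) // A.card = a₀}),
     (⟨tailPerm τs.1, MC_tailPerm τs.1 τs.2⟩ :
        {σ : Equiv.Perm (Fin (rest.sum + 1)) // MC (p + 1) rest σ})) with hF
  have hinj : Function.Injective F := by
    rintro ⟨τ₁, h₁⟩ ⟨τ₂, h₂⟩ h
    simp only [hF, Prod.mk.injEq, Subtype.mk.injEq] at h
    exact Subtype.ext (tau_eq h₁ h₂ h.1 h.2)
  have hle := Nat.card_le_card_of_injective F hinj
  rw [Nat.card_prod] at hle
  have hcA : Nat.card {A : Finset (Fin ((a₀ :: rest).sum + 1)) // A.card = a₀} =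
      ((a₀ :: rest).sum + 1).choose a₀ := by
    rw [Nat.card_eq_fintype_card]
    have := Fintype.card_finset_len (α := Fin ((a₀ :: rest).sum + 1)) a₀
    rw [Fintype.card_fin] at this
    convert this
  rw [hcA] at hle
  exact hle

end Rec2

lemma om_bound (a : List ℕ) : ∀ p : ℕ,
    Nat.card {τ : Equiv.Perm (Fin (a.sum + 1)) // MC p a τ} * (a.map Nat.factorial).prod ≤
      (a.sum + 1).factorial := by
  induction a with
  | nil =>
    intro p
    simp only [List.map_nil, List.prod_nil, mul_one]
    have h1 : Nat.card {τ : Equiv.Perm (Fin (([] : List ℕ).sum + 1)) // MC p [] τ} ≤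
        Nat.card (Equiv.Perm (Fin (([] : List ℕ).sum + 1))) :=
      Nat.card_le_card_of_injective _ Subtype.coe_injective
    have h2 : Nat.card (Equiv.Perm (Fin (([] : List ℕ).sum + 1))) = 1 := by
      rw [Nat.card_eq_fintype_card, Fintype.card_perm, Fintype.card_fin]
      rfl
    have h3 : ((([] : List ℕ).sum) + 1).factorial = 1 := rfl
    omega
  | cons a₀ rest ih =>
    intro p
    have hrec := rec_step p a₀ rest
    have hih := ih (p + 1)
    have hsum : (a₀ :: rest).sum = a₀ + rest.sum := List.sum_cons
    rw [List.map_cons, List.prod_cons]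
    set C := Nat.card {τ : Equiv.Perm (Fin ((a₀ :: rest).sum + 1)) // MC p (a₀ :: rest) τ}
    set D := Nat.card {σ : Equiv.Perm (Fin (rest.sum + 1)) // MC (p + 1) rest σ}
    set P := (rest.map Nat.factorial).prod
    calc C * (a₀.factorial * P)
        ≤ (((a₀ :: rest).sum + 1).choose a₀ * D) * (a₀.factorial * P) :=
          Nat.mul_le_mul_right _ hrec
      _ = ((a₀ :: rest).sum + 1).choose a₀ * a₀.factorial * (D * P) := by ring
      _ ≤ ((a₀ :: rest).sum + 1).choose a₀ * a₀.factorial * (rest.sum + 1).factorial :=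
          Nat.mul_le_mul_left _ hih
      _ = ((a₀ :: rest).sum + 1).factorial := by
          have h1 : a₀ ≤ (a₀ :: rest).sum + 1 := by omega
          have hmain := Nat.choose_mul_factorial_mul_factorial h1
          have h2 : (a₀ :: rest).sum + 1 - a₀ = rest.sum + 1 := by omega
          rw [h2] at hmain
          exact hmain

lemma omega_mul_le (a : List ℕ) :
    Omega a * (a.map Nat.factorial).prod ≤ (a.sum + 1).factorial := by
  have h : Omega a = Nat.card {τ : Equiv.Perm (Fin (a.sum + 1)) // MC 0 a τ} := by
    unfold Omega
    exact Nat.card_congr (Equiv.subtypeEquivRight fun τ => monotCond_iff a τ)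
  rw [h]
  exact om_bound a 0

lemma sum_succ_le_prod (n : ℕ) (i : Fin n → ℕ) : (∑ k, i k) + 1 ≤ ∏ k, (i k + 1) := by
  induction n with
  | zero => simp
  | succ m ih =>
    rw [Fin.sum_univ_succ, Fin.prod_univ_succ]
    have h := ih (fun k => i k.succ)
    nlinarith [Nat.zero_le (i 0), Nat.zero_le (∑ k : Fin m, i k.succ)]

lemma multinom_le (n : ℕ) (i : Fin n → ℕ) (y : Fin n → ℝ) (hy : ∀ k, 0 ≤ y k) :
    (Nat.factorial (∑ k, i k) : ℝ) * ∏ k, y k ^ i k ≤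
      (∑ k, y k) ^ (∑ k, i k) * ∏ k, (Nat.factorial (i k) : ℝ) := by
  induction n with
  | zero => simp
  | succ m ih =>
    rw [Fin.sum_univ_succ, Fin.prod_univ_succ, Fin.sum_univ_succ, Fin.prod_univ_succ]
    set a := i 0
    set M := ∑ k : Fin m, i k.succ
    set T := ∑ k : Fin m, y k.succ with hT
    have hT0 : 0 ≤ T := Finset.sum_nonneg fun k _ => hy k.succ
    have hy0 := hy 0
    have ihm := ih (fun k => i k.succ) (fun k => y k.succ) (fun k => hy k.succ)
    have hQ0 : 0 ≤ ∏ k : Fin m, y k.succ ^ i k.succ :=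
      Finset.prod_nonneg fun k _ => pow_nonneg (hy k.succ) _
    have hP : (0:ℝ) ≤ ∏ k : Fin m, (Nat.factorial (i k.succ) : ℝ) := by positivity
    have hfa : (0:ℝ) ≤ (a.factorial : ℝ) := by positivity
    have hfact : (a + M).factorial = (a+M).choose a * a.factorial * M.factorial := by
      have := Nat.choose_mul_factorial_mul_factorial (Nat.le_add_right a M)
      simpa using this.symm
    -- single binomial term bound
    have hbin : ((a+M).choose a : ℝ) * y 0 ^ a * T ^ M ≤ (y 0 + T) ^ (a + M) := by
      have hexp := add_pow (y 0) T (a + M)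
      have hmem : a ∈ Finset.range (a + M + 1) := by simp
      have hsingle := Finset.single_le_sum (f := fun j => y 0 ^ j * T ^ (a + M - j) * ((a+M).choose j : ℝ))
        (fun j _ => by positivity) hmem
      rw [← hexp] at hsingle
      have h' : y 0 ^ a * T ^ (a + M - a) * ((a+M).choose a : ℝ) ≤ (y 0 + T) ^ (a + M) := hsingle
      rw [Nat.add_sub_cancel_left] at h'
      calc ((a+M).choose a : ℝ) * y 0 ^ a * T ^ M
          = y 0 ^ a * T ^ M * ((a+M).choose a : ℝ) := by ring
        _ ≤ _ := h'
    calc ((a + M).factorial : ℝ) * (y 0 ^ a * ∏ k : Fin m, y k.succ ^ i k.succ)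
        = ((a+M).choose a : ℝ) * y 0 ^ a * ((M.factorial : ℝ) * ∏ k : Fin m, y k.succ ^ i k.succ) * (a.factorial : ℝ) := by
          rw [hfact]; push_cast; ring
      _ ≤ ((a+M).choose a : ℝ) * y 0 ^ a * (T ^ M * ∏ k : Fin m, (Nat.factorial (i k.succ) : ℝ)) * (a.factorial : ℝ) := by
          have hc : (0:ℝ) ≤ ((a+M).choose a : ℝ) * y 0 ^ a := by positivity
          have h2 := mul_le_mul_of_nonneg_left ihm hc
          have h3 := mul_le_mul_of_nonneg_right h2 hfa
          calc ((a+M).choose a : ℝ) * y 0 ^ a * ((M.factorial : ℝ) * ∏ k : Fin m, y k.succ ^ i k.succ) * (a.factorial : ℝ)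
              = ((a+M).choose a : ℝ) * y 0 ^ a * ((M.factorial : ℝ) * ∏ k : Fin m, y k.succ ^ i k.succ) * (a.factorial : ℝ) := rfl
            _ ≤ ((a+M).choose a : ℝ) * y 0 ^ a * (T ^ M * ∏ k : Fin m, (Nat.factorial (i k.succ) : ℝ)) * (a.factorial : ℝ) := h3
      _ ≤ (y 0 + T) ^ (a + M) * ((a.factorial : ℝ) * ∏ k : Fin m, (Nat.factorial (i k.succ) : ℝ)) := by
          have h4 := mul_le_mul_of_nonneg_right hbin (mul_nonneg hfa hP)
          calc ((a+M).choose a : ℝ) * y 0 ^ a * (T ^ M * ∏ k : Fin m, (Nat.factorial (i k.succ) : ℝ)) * (a.factorial : ℝ)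
              = ((a+M).choose a : ℝ) * y 0 ^ a * T ^ M * ((a.factorial : ℝ) * ∏ k : Fin m, (Nat.factorial (i k.succ) : ℝ)) := by ring
            _ ≤ (y 0 + T) ^ (a + M) * ((a.factorial : ℝ) * ∏ k : Fin m, (Nat.factorial (i k.succ) : ℝ)) := h4

lemma summable_pi (n : ℕ) (f : Fin n → ℕ → ℝ) (hf : ∀ k, Summable (f k))
    (hf0 : ∀ k m, 0 ≤ f k m) :
    Summable (fun i : Fin n → ℕ => ∏ k, f k (i k)) := by
  induction n with
  | zero =>
    simp only [Finset.univ_eq_empty, Finset.prod_empty]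
    exact summable_of_finite_support (Set.Finite.subset (Set.finite_univ) (by simp))
  | succ m ih =>
    have key : Summable (fun p : ℕ × (Fin m → ℕ) => f 0 p.1 * ∏ k : Fin m, f k.succ (p.2 k)) := by
      apply Summable.mul_of_nonneg (hf 0) (ih (fun k => f k.succ) (fun k => hf k.succ) (fun k => hf0 k.succ))
      · intro m; exact hf0 0 m
      · intro p; exact Finset.prod_nonneg fun k _ => hf0 k.succ _
    have heq : (fun i : Fin (m+1) → ℕ => ∏ k, f k (i k)) ∘ (Fin.consEquiv fun _ => ℕ)
        = fun p : ℕ × (Fin m → ℕ) => f 0 p.1 * ∏ k : Fin m, f k.succ (p.2 k) := by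
      funext p
      simp [Fin.consEquiv, Fin.prod_univ_succ]
    exact ((Fin.consEquiv fun _ => ℕ).summable_iff).mp (heq ▸ key)

lemma summable_geom_aux {r : ℝ} (h0 : 0 ≤ r) (h1 : r < 1) :
    Summable (fun m : ℕ => ((m:ℝ) + 1) * r ^ m) := by
  have h1' : ‖r‖ < 1 := by rwa [Real.norm_eq_abs, abs_of_nonneg h0]
  have hs := summable_pow_mul_geometric_of_norm_lt_one 1 h1'
  simp only [pow_one] at hs
  have hg := summable_geometric_of_lt_one h0 h1
  have := hs.add hg
  exact this.congr fun m => by ring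

theorem stmt_3 (n : ℕ) (hn : 1 ≤ n) (x : Fin n → ℝ)
    (hx : ∑ k : Fin n, |x k| < 1) :
    Summable (fun i : Fin n → ℕ =>
      |(Omega (List.ofFn i) : ℝ) * ∏ k : Fin n, x k ^ i k|) := by
  set y : Fin n → ℝ := fun k => |x k| with hy
  have hy0 : ∀ k, 0 ≤ y k := fun k => abs_nonneg _
  set r : ℝ := ∑ k, y k with hr
  have hr0 : 0 ≤ r := Finset.sum_nonneg fun k _ => hy0 k
  have hr1 : r < 1 := hx
  have hsummable : Summable (fun i : Fin n → ℕ => ∏ k, (((i k : ℝ) + 1) * r ^ i k)) :=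
    summable_pi n (fun _ m => ((m : ℝ) + 1) * r ^ m)
      (fun _ => summable_geom_aux hr0 hr1)
      (fun _ m => mul_nonneg (by positivity) (pow_nonneg hr0 m))
  apply Summable.of_nonneg_of_le (fun i => abs_nonneg _) _ hsummable
  intro i
  set N := ∑ k, i k with hN
  have habs : |(Omega (List.ofFn i) : ℝ) * ∏ k, x k ^ i k| =
      (Omega (List.ofFn i) : ℝ) * ∏ k, y k ^ i k := by
    rw [abs_mul, Nat.abs_cast, Finset.abs_prod]
    congr 1
    exact Finset.prod_congr rfl fun k _ => abs_pow _ _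
  rw [habs]
  have hfacts : (0:ℝ) < ∏ k, ((i k).factorial : ℝ) := by positivity
  rw [← mul_le_mul_iff_of_pos_right hfacts]
  -- the Nat bound on Omega
  have h1nat := omega_mul_le (List.ofFn i)
  have hsum : (List.ofFn i).sum = N := by rw [List.sum_ofFn]
  have hprod : ((List.ofFn i).map Nat.factorial).prod = ∏ k, (i k).factorial := by
    rw [List.map_ofFn, List.prod_ofFn]
    rfl
  rw [hsum, hprod] at h1nat
  have h1 : (Omega (List.ofFn i) : ℝ) * ∏ k, ((i k).factorial : ℝ) ≤
      ((N + 1).factorial : ℝ) := by exact_mod_cast h1nat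
  have h2 := multinom_le n i y hy0
  rw [← hN, ← hr] at h2
  have h3 : ((N : ℝ) + 1) ≤ ∏ k, ((i k : ℝ) + 1) := by
    have := sum_succ_le_prod n i
    have hcast : ((∑ k, i k : ℕ) : ℝ) + 1 ≤ ((∏ k, (i k + 1) : ℕ) : ℝ) := by
      exact_mod_cast this
    push_cast at hcast
    exact_mod_cast hcast
  have h4 : r ^ N = ∏ k, r ^ i k := (Finset.prod_pow_eq_pow_sum Finset.univ i r).symm
  have hyprod : (0:ℝ) ≤ ∏ k, y k ^ i k :=
    Finset.prod_nonneg fun k _ => pow_nonneg (hy0 k) _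
  calc (Omega (List.ofFn i) : ℝ) * (∏ k, y k ^ i k) * ∏ k, ((i k).factorial : ℝ)
      = ((Omega (List.ofFn i) : ℝ) * ∏ k, ((i k).factorial : ℝ)) * ∏ k, y k ^ i k := by
        ring
    _ ≤ ((N + 1).factorial : ℝ) * ∏ k, y k ^ i k :=
        mul_le_mul_of_nonneg_right h1 hyprod
    _ = ((N : ℝ) + 1) * ((N.factorial : ℝ) * ∏ k, y k ^ i k) := by
        rw [Nat.factorial_succ]; push_cast; ring
    _ ≤ ((N : ℝ) + 1) * (r ^ N * ∏ k, ((i k).factorial : ℝ)) :=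
        mul_le_mul_of_nonneg_left h2 (by positivity)
    _ ≤ (∏ k, ((i k : ℝ) + 1)) * (r ^ N * ∏ k, ((i k).factorial : ℝ)) :=
        mul_le_mul_of_nonneg_right h3 (by positivity)
    _ = (∏ k, (((i k : ℝ) + 1) * r ^ i k)) * ∏ k, ((i k).factorial : ℝ) := by
        rw [h4, ← mul_assoc, ← Finset.prod_mul_distrib]
end

section
/- For any n ∈ ℕ, n ≥ 1, and any positive integers i₁, j₁, …, iₙ, jₙ with N := i₁ + j₁ + ⋯ + iₙ + jₙ, one has Ω'(i₁, j₁, …, iₙ, jₙ) = (1/(N+1)) · Σ_{k=1}^{n} Ω'(i₁, j₁, …, i_{k−1}, j_{k−1}, i_k − 1) · Ω'(j_k − 1, i_{k+1}, j_{k+1}, …, iₙ, jₙ), where the first factor has the 2k−1 arguments i₁, j₁, …, i_k − 1 and the second factor has the 2(n−k)+1 arguments j_k − 1, i_{k+1}, j_{k+1}, …, iₙ, jₙ. -/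
/-- Step `m → m+1` should be increasing. -/
def UpAt (b : List ℕ) (m : ℕ) : Prop :=
  ∃ k, k < b.length ∧ k % 2 = 0 ∧ (b.take k).sum ≤ m ∧ m < (b.take (k + 1)).sum

lemma sum_take_le (l : List ℕ) (k : ℕ) : (l.take k).sum ≤ l.sum := by
  conv_rhs => rw [← List.take_append_drop k l]
  rw [List.sum_append]
  omega

lemma take_sum_mono_s7 (l : List ℕ) {k k' : ℕ} (h : k ≤ k') :
    (l.take k).sum ≤ (l.take k').sum := by
  have : l.take k = (l.take k').take k := by
    rw [List.take_take, Nat.min_eq_left h]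
  rw [this]
  exact sum_take_le _ _

lemma exists_block_s7 (b : List ℕ) (m : ℕ) (h : m < b.sum) :
    ∃ k, k < b.length ∧ (b.take k).sum ≤ m ∧ m < (b.take (k + 1)).sum := by
  induction b generalizing m with
  | nil => simp at h
  | cons x t ih =>
    by_cases hx : m < x
    · exact ⟨0, by simp, by simp, by simpa using hx⟩
    · have hm : m - x < t.sum := by simp at h; omega
      obtain ⟨k, hk, h1, h2⟩ := ih (m - x) hm
      refine ⟨k + 1, by simpa using hk, ?_, ?_⟩
      · simpa using by omega
      · simp only [List.take_succ_cons, List.sum_cons]; omega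

lemma block_unique (b : List ℕ) {m k k' : ℕ}
    (h1 : (b.take k).sum ≤ m) (h2 : m < (b.take (k + 1)).sum)
    (h1' : (b.take k').sum ≤ m) (h2' : m < (b.take (k' + 1)).sum) : k = k' := by
  by_contra hne
  rcases Nat.lt_or_ge k k' with h | h
  · have := take_sum_mono_s7 b (show k + 1 ≤ k' from h)
    omega
  · have hlt : k' < k := by omega
    have := take_sum_mono_s7 b (show k' + 1 ≤ k from hlt)
    omega

lemma not_upAt_iff (b : List ℕ) {m : ℕ} (hm : m < b.sum) :
    ¬ UpAt b m ↔ ∃ k, k < b.length ∧ k % 2 = 1 ∧ (b.take k).sum ≤ m ∧ m < (b.take (k + 1)).sum := by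
  obtain ⟨k, hk, h1, h2⟩ := exists_block_s7 b m hm
  constructor
  · intro h
    have hodd : k % 2 = 1 := by
      rcases Nat.mod_two_eq_zero_or_one k with h0 | h1'
      · exact absurd ⟨k, hk, h0, h1, h2⟩ h
      · exact h1'
    exact ⟨k, hk, hodd, h1, h2⟩
  · rintro ⟨k', hk', hodd, h1', h2'⟩ ⟨k'', hk'', heven, h1'', h2''⟩
    have := block_unique b h1' h2' h1'' h2''
    omega

lemma monotCond_iff_s7 (b : List ℕ) (τ : Equiv.Perm (Fin (b.sum + 1))) :
    MonotCond b τ ↔ ∀ m (h : m + 1 < b.sum + 1),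
      (τ ⟨m, Nat.lt_of_succ_lt h⟩ < τ ⟨m + 1, h⟩ ↔ UpAt b m) := by
  constructor
  · intro H m h
    have hm : m < b.sum := by omega
    obtain ⟨k, hk, h1, h2⟩ := exists_block_s7 b m hm
    have := H k hk m h1 h2 h
    rcases Nat.mod_two_eq_zero_or_one k with hpar | hpar
    · rw [if_pos hpar] at this
      exact ⟨fun _ => ⟨k, hk, hpar, h1, h2⟩, fun _ => this⟩
    · rw [if_neg (by omega)] at this
      constructor
      · intro hlt; exact absurd hlt (lt_asymm this)
      · rintro ⟨k', hk', heven, h1', h2'⟩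
        have := block_unique b h1 h2 h1' h2'
        omega
  · intro H k hk m h1 h2 h
    have := H m h
    split_ifs with hpar
    · exact this.mpr ⟨k, hk, hpar, h1, h2⟩
    · have hnot : ¬ UpAt b m := by
        rintro ⟨k', hk', heven, h1', h2'⟩
        have := block_unique b h1 h2 h1' h2'
        omega
      have hle : ¬ (τ ⟨m, Nat.lt_of_succ_lt h⟩ < τ ⟨m + 1, h⟩) := fun hc => hnot (this.mp hc)
      have hne : τ ⟨m + 1, h⟩ ≠ τ ⟨m, Nat.lt_of_succ_lt h⟩ := by
        intro he
        have := τ.injective he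
        simp [Fin.ext_iff] at this
      exact lt_of_le_of_ne (not_lt.mp hle) hne

section Split

lemma orderIsoOfFin_coe_congr {α : Type*} [LinearOrder α] {S S' : Finset α} (h : S = S')
    {k : ℕ} (hS : S.card = k) (hS' : S'.card = k) (x : Fin k) :
    (S.orderIsoOfFin hS x : α) = (S'.orderIsoOfFin hS' x : α) := by subst h; rfl

variable {α : Type*} [LinearOrder α] [Fintype α] [DecidableEq α]

lemma stdz_card {k : ℕ} (f : Fin k → α) (hf : Function.Injective f) :
    (Finset.image f Finset.univ).card = k := by
  rw [Finset.card_image_of_injective _ hf, Finset.card_univ, Fintype.card_fin]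

noncomputable def stdz {k : ℕ} (f : Fin k → α) (hf : Function.Injective f) :
    Equiv.Perm (Fin k) :=
  Equiv.ofBijective
    (fun q => ((Finset.image f Finset.univ).orderIsoOfFin (stdz_card f hf)).symm
      ⟨f q, Finset.mem_image_of_mem f (Finset.mem_univ q)⟩)
    (Finite.injective_iff_bijective.mp (fun q q' h => by
      have h2 := congrArg
        (fun z => (((Finset.image f Finset.univ).orderIsoOfFin (stdz_card f hf)) z : α)) h
      simp only [OrderIso.apply_symm_apply] at h2
      exact hf h2))

lemma stdz_spec {k : ℕ} (f : Fin k → α) (hf : Function.Injective f) (q : Fin k) :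
    ((Finset.image f Finset.univ).orderIsoOfFin (stdz_card f hf) (stdz f hf q) : α) = f q := by
  show (((Finset.image f Finset.univ).orderIsoOfFin (stdz_card f hf))
    (((Finset.image f Finset.univ).orderIsoOfFin (stdz_card f hf)).symm _) : α) = f q
  rw [OrderIso.apply_symm_apply]

lemma stdz_lt_iff {k : ℕ} (f : Fin k → α) (hf : Function.Injective f) (q q' : Fin k) :
    stdz f hf q < stdz f hf q' ↔ f q < f q' := by
  rw [← (((Finset.image f Finset.univ).orderIsoOfFin (stdz_card f hf))).lt_iff_lt,
    ← Subtype.coe_lt_coe, stdz_spec, stdz_spec]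

variable {N p r : ℕ}

lemma card_Tset (hpr : p + 1 + r = N + 1) (S : Finset (Fin (N + 1))) (hS : S.card = p)
    (hsub : S ⊆ Finset.univ.erase (Fin.last N)) :
    ((Finset.univ.erase (Fin.last N)) \ S).card = r := by
  rw [Finset.card_sdiff_of_subset hsub, Finset.card_erase_of_mem (Finset.mem_univ _), Finset.card_univ,
    Fintype.card_fin, hS]
  have : p ≤ (Finset.univ.erase (Fin.last N)).card := by
    rw [← hS]; exact Finset.card_le_card hsub
  rw [Finset.card_erase_of_mem (Finset.mem_univ _), Finset.card_univ, Fintype.card_fin] at this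
  omega

noncomputable def assembleFun (hpr : p + 1 + r = N + 1) (S : Finset (Fin (N + 1)))
    (hS : S.card = p) (hsub : S ⊆ Finset.univ.erase (Fin.last N))
    (σ : Fin p → Fin p) (ρ : Fin r → Fin r) : Fin (N + 1) → Fin (N + 1) := fun q =>
  if h1 : (q : ℕ) < p then (S.orderIsoOfFin hS (σ ⟨q, h1⟩) : Fin (N + 1))
  else if h2 : (q : ℕ) = p then Fin.last N
  else ((Finset.univ.erase (Fin.last N) \ S).orderIsoOfFin (card_Tset hpr S hS hsub)
    (Fin.rev (ρ ⟨(q : ℕ) - (p + 1), by have := q.isLt; omega⟩)) : Fin (N + 1))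

lemma last_not_mem_of_sub {S : Finset (Fin (N + 1))}
    (hsub : S ⊆ Finset.univ.erase (Fin.last N)) : Fin.last N ∉ S :=
  fun hl => (Finset.mem_erase.mp (hsub hl)).1 rfl

lemma assembleFun_injective (hpr : p + 1 + r = N + 1) (S : Finset (Fin (N + 1)))
    (hS : S.card = p) (hsub : S ⊆ Finset.univ.erase (Fin.last N))
    (σ : Fin p → Fin p) (ρ : Fin r → Fin r)
    (hσ : Function.Injective σ) (hρ : Function.Injective ρ) :
    Function.Injective (assembleFun hpr S hS hsub σ ρ) := by
  have hSmem : ∀ x : Fin p, (S.orderIsoOfFin hS x : Fin (N + 1)) ∈ S := fun x =>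
    (S.orderIsoOfFin hS x).2
  have hTmem : ∀ x : Fin r,
      ((Finset.univ.erase (Fin.last N) \ S).orderIsoOfFin (card_Tset hpr S hS hsub) x : Fin (N + 1))
        ∈ Finset.univ.erase (Fin.last N) \ S := fun x =>
    ((Finset.univ.erase (Fin.last N) \ S).orderIsoOfFin (card_Tset hpr S hS hsub) x).2
  intro q q' heq
  have hq := q.isLt
  have hq' := q'.isLt
  simp only [assembleFun] at heq
  split_ifs at heq with h1 h2 h3 h4 h5
  · have := hσ ((S.orderIsoOfFin hS).injective (Subtype.coe_injective heq))
    have := congrArg Fin.val this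
    exact Fin.val_injective (by simpa using this)
  · exact absurd (heq ▸ hSmem _) (last_not_mem_of_sub hsub)
  · have hT := hTmem (Fin.rev (ρ ⟨(q' : ℕ) - (p + 1), by omega⟩))
    rw [← heq] at hT
    exact absurd (hSmem _) (Finset.mem_sdiff.mp hT).2
  · exact absurd (heq ▸ hSmem _) (last_not_mem_of_sub hsub)
  · exact Fin.val_injective (by omega)
  · have hT := hTmem (Fin.rev (ρ ⟨(q' : ℕ) - (p + 1), by omega⟩))
    rw [← heq] at hT
    exact absurd (Finset.mem_sdiff.mp hT).1 (by simp)
  · have hT := hTmem (Fin.rev (ρ ⟨(q : ℕ) - (p + 1), by omega⟩))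
    rw [heq] at hT
    exact absurd (hSmem _) (Finset.mem_sdiff.mp hT).2
  · have hT := hTmem (Fin.rev (ρ ⟨(q : ℕ) - (p + 1), by omega⟩))
    rw [heq] at hT
    exact absurd (Finset.mem_sdiff.mp hT).1 (by simp)
  · have := ((Finset.univ.erase (Fin.last N) \ S).orderIsoOfFin
      (card_Tset hpr S hS hsub)).injective (Subtype.coe_injective heq)
    have h7 := hρ (Fin.rev_injective this)
    simp only [Fin.mk.injEq] at h7
    exact Fin.val_injective (by omega)

noncomputable def assemble (hpr : p + 1 + r = N + 1) (S : Finset (Fin (N + 1)))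
    (hS : S.card = p) (hsub : S ⊆ Finset.univ.erase (Fin.last N))
    (σ : Equiv.Perm (Fin p)) (ρ : Equiv.Perm (Fin r)) : Equiv.Perm (Fin (N + 1)) :=
  Equiv.ofBijective _ (Finite.injective_iff_bijective.mp
    (assembleFun_injective hpr S hS hsub σ ρ σ.injective ρ.injective))

lemma assemble_apply_lt (hpr : p + 1 + r = N + 1) (S : Finset (Fin (N + 1)))
    (hS : S.card = p) (hsub : S ⊆ Finset.univ.erase (Fin.last N))
    (σ : Equiv.Perm (Fin p)) (ρ : Equiv.Perm (Fin r)) (q : Fin (N + 1)) (h : (q : ℕ) < p) :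
    assemble hpr S hS hsub σ ρ q = (S.orderIsoOfFin hS (σ ⟨q, h⟩) : Fin (N + 1)) := by
  show assembleFun hpr S hS hsub σ ρ q = _
  rw [assembleFun, dif_pos h]

lemma assemble_apply_eq (hpr : p + 1 + r = N + 1) (S : Finset (Fin (N + 1)))
    (hS : S.card = p) (hsub : S ⊆ Finset.univ.erase (Fin.last N))
    (σ : Equiv.Perm (Fin p)) (ρ : Equiv.Perm (Fin r)) (q : Fin (N + 1)) (h : (q : ℕ) = p) :
    assemble hpr S hS hsub σ ρ q = Fin.last N := by
  show assembleFun hpr S hS hsub σ ρ q = _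
  rw [assembleFun, dif_neg (by omega), dif_pos h]

lemma assemble_apply_gt (hpr : p + 1 + r = N + 1) (S : Finset (Fin (N + 1)))
    (hS : S.card = p) (hsub : S ⊆ Finset.univ.erase (Fin.last N))
    (σ : Equiv.Perm (Fin p)) (ρ : Equiv.Perm (Fin r)) (q : Fin (N + 1)) (h : p < (q : ℕ)) :
    assemble hpr S hS hsub σ ρ q =
      ((Finset.univ.erase (Fin.last N) \ S).orderIsoOfFin (card_Tset hpr S hS hsub)
        (Fin.rev (ρ ⟨(q : ℕ) - (p + 1), by have := q.isLt; omega⟩)) : Fin (N + 1)) := by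
  show assembleFun hpr S hS hsub σ ρ q = _
  rw [assembleFun, dif_neg (by omega), dif_neg (by omega)]

def leftFun (hpr : p + 1 + r = N + 1) (τ : Equiv.Perm (Fin (N + 1))) (q : Fin p) :
    Fin (N + 1) := τ (Fin.castLE (by omega) q)

def rightFun (hpr : p + 1 + r = N + 1) (τ : Equiv.Perm (Fin (N + 1))) (q : Fin r) :
    Fin (N + 1) := τ ⟨p + 1 + q, by have := q.isLt; omega⟩

lemma leftFun_inj (hpr : p + 1 + r = N + 1) (τ : Equiv.Perm (Fin (N + 1))) :
    Function.Injective (leftFun hpr τ) := fun q q' h => by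
  have := congrArg Fin.val (τ.injective h)
  simp only [Fin.coe_castLE] at this
  exact Fin.val_injective this

lemma rightFun_inj (hpr : p + 1 + r = N + 1) (τ : Equiv.Perm (Fin (N + 1))) :
    Function.Injective (rightFun hpr τ) := fun q q' h => by
  have := congrArg Fin.val (τ.injective h)
  simp only [] at this
  exact Fin.val_injective (by omega)

noncomputable def disassemble (hpr : p + 1 + r = N + 1) (τ : Equiv.Perm (Fin (N + 1))) :
    Finset (Fin (N + 1)) × Equiv.Perm (Fin p) × Equiv.Perm (Fin r) :=
  ⟨Finset.image (leftFun hpr τ) Finset.univ,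
   stdz _ (leftFun_inj hpr τ),
   (stdz _ (rightFun_inj hpr τ)).trans (Fin.revPerm)⟩

lemma leftSub (hpr : p + 1 + r = N + 1) (τ : Equiv.Perm (Fin (N + 1)))
    (hτ : τ ⟨p, by omega⟩ = Fin.last N) :
    Finset.image (leftFun hpr τ) Finset.univ ⊆ Finset.univ.erase (Fin.last N) := by
  intro x hx
  obtain ⟨q, -, rfl⟩ := Finset.mem_image.mp hx
  refine Finset.mem_erase.mpr ⟨?_, Finset.mem_univ _⟩
  intro hlast
  have : Fin.castLE (by omega : p ≤ N + 1) q = (⟨p, by omega⟩ : Fin (N + 1)) :=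
    τ.injective (hlast.trans hτ.symm)
  have := congrArg Fin.val this
  simp only [Fin.coe_castLE] at this
  exact absurd this (by have := q.isLt; omega)

lemma rightSet_eq (hpr : p + 1 + r = N + 1) (τ : Equiv.Perm (Fin (N + 1)))
    (hτ : τ ⟨p, by omega⟩ = Fin.last N) :
    Finset.univ.erase (Fin.last N) \ Finset.image (leftFun hpr τ) Finset.univ =
      Finset.image (rightFun hpr τ) Finset.univ := by
  ext y
  simp only [Finset.mem_sdiff, Finset.mem_erase, Finset.mem_univ, and_true, true_and,
    Finset.mem_image]
  constructor
  · rintro ⟨hne, hnotin⟩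
    set q0 := τ.symm y with hq0
    have hy : τ q0 = y := τ.apply_symm_apply y
    have hq0p : (q0 : ℕ) ≠ p := by
      intro hp
      apply hne
      rw [← hy, ← hτ]
      exact congrArg τ (Fin.val_injective hp)
    rcases Nat.lt_or_ge (q0 : ℕ) p with hlt | hge
    · exact absurd ⟨⟨(q0 : ℕ), hlt⟩, by
        show τ _ = y
        rw [← hy]
        exact congrArg τ (Fin.val_injective (by simp))⟩ hnotin
    · have hgt : p + 1 ≤ (q0 : ℕ) := by omega
      refine ⟨⟨(q0 : ℕ) - (p + 1), by have := q0.isLt; omega⟩, ?_⟩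
      show τ _ = y
      refine Eq.trans ?_ hy
      exact congrArg τ (Fin.val_injective
        (by show p + 1 + ((q0 : ℕ) - (p + 1)) = (q0 : ℕ); omega))
  · rintro ⟨q, -, rfl⟩
    constructor
    · intro hlast
      have : (⟨p + 1 + (q : ℕ), by have := q.isLt; omega⟩ : Fin (N + 1)) = ⟨p, by omega⟩ :=
        τ.injective (hlast.trans hτ.symm)
      have := congrArg Fin.val this
      simp only [] at this
      omega
    · intro hmem
      obtain ⟨q', hq'⟩ := hmem
      have := congrArg Fin.val (τ.injective hq')
      simp only [Fin.coe_castLE] at this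
      have := q'.isLt
      omega

lemma assemble_disassemble (hpr : p + 1 + r = N + 1) (τ : Equiv.Perm (Fin (N + 1)))
    (hτ : τ ⟨p, by omega⟩ = Fin.last N)
    (hS : (Finset.image (leftFun hpr τ) Finset.univ).card = p)
    (hsub : Finset.image (leftFun hpr τ) Finset.univ ⊆ Finset.univ.erase (Fin.last N)) :
    assemble hpr (Finset.image (leftFun hpr τ) Finset.univ) hS hsub
      (stdz _ (leftFun_inj hpr τ)) ((stdz _ (rightFun_inj hpr τ)).trans Fin.revPerm) = τ := by
  apply Equiv.ext
  intro q
  rcases lt_trichotomy (q : ℕ) p with h | h | h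
  · rw [assemble_apply_lt _ _ _ _ _ _ _ h,
      orderIsoOfFin_coe_congr rfl hS (stdz_card _ (leftFun_inj hpr τ)), stdz_spec]
    show τ _ = τ q
    exact congrArg τ (Fin.val_injective (by simp))
  · rw [assemble_apply_eq _ _ _ _ _ _ _ h, ← hτ]
    exact congrArg τ (Fin.val_injective (by simp [h])).symm
  · rw [assemble_apply_gt _ _ _ _ _ _ _ h]
    have hrev : ∀ z, Fin.rev (((stdz _ (rightFun_inj hpr τ)).trans Fin.revPerm) z) =
        stdz _ (rightFun_inj hpr τ) z := by
      intro z
      simp [Equiv.trans_apply, Fin.rev_rev]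
    rw [hrev,
      orderIsoOfFin_coe_congr (rightSet_eq hpr τ hτ) (card_Tset hpr _ hS hsub)
        (stdz_card _ (rightFun_inj hpr τ)), stdz_spec]
    show τ _ = τ q
    refine congrArg τ (Fin.val_injective ?_)
    show p + 1 + ((q : ℕ) - (p + 1)) = (q : ℕ)
    omega

lemma disassemble_assemble (hpr : p + 1 + r = N + 1) (S : Finset (Fin (N + 1)))
    (hS : S.card = p) (hsub : S ⊆ Finset.univ.erase (Fin.last N))
    (σ : Equiv.Perm (Fin p)) (ρ : Equiv.Perm (Fin r)) :
    disassemble hpr (assemble hpr S hS hsub σ ρ) = (S, σ, ρ) := by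
  set g := assemble hpr S hS hsub σ ρ with hg
  have hleft : ∀ q : Fin p, leftFun hpr g q = (S.orderIsoOfFin hS (σ q) : Fin (N + 1)) :=
    fun q => assemble_apply_lt hpr S hS hsub σ ρ (Fin.castLE (by omega) q)
      (by simpa using q.isLt)
  have hright : ∀ q : Fin r, rightFun hpr g q =
      ((Finset.univ.erase (Fin.last N) \ S).orderIsoOfFin (card_Tset hpr S hS hsub)
        (Fin.rev (ρ q)) : Fin (N + 1)) := by
    intro q
    have h := assemble_apply_gt hpr S hS hsub σ ρ
      ⟨p + 1 + (q : ℕ), by have := q.isLt; omega⟩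
      (by show p < p + 1 + (q : ℕ); omega)
    refine h.trans ?_
    exact congrArg (fun z => ((Finset.univ.erase (Fin.last N) \ S).orderIsoOfFin
      (card_Tset hpr S hS hsub) (Fin.rev (ρ z)) : Fin (N + 1)))
      (Fin.val_injective (show p + 1 + (q : ℕ) - (p + 1) = (q : ℕ) by omega))
  have hSeq : Finset.image (leftFun hpr g) Finset.univ = S := by
    ext y
    simp only [Finset.mem_image, Finset.mem_univ, true_and]
    constructor
    · rintro ⟨q, rfl⟩
      rw [hleft]
      exact (S.orderIsoOfFin hS (σ q)).2
    · intro hy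
      refine ⟨σ.symm ((S.orderIsoOfFin hS).symm ⟨y, hy⟩), ?_⟩
      rw [hleft]
      simp
  have hTeq : Finset.image (rightFun hpr g) Finset.univ =
      Finset.univ.erase (Fin.last N) \ S := by
    ext y
    simp only [Finset.mem_image, Finset.mem_univ, true_and]
    constructor
    · rintro ⟨q, rfl⟩
      rw [hright]
      exact ((Finset.univ.erase (Fin.last N) \ S).orderIsoOfFin _ _).2
    · intro hy
      refine ⟨ρ.symm (Fin.rev (((Finset.univ.erase (Fin.last N) \ S).orderIsoOfFin
        (card_Tset hpr S hS hsub)).symm ⟨y, hy⟩)), ?_⟩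
      rw [hright]
      simp [Fin.rev_rev]
  refine Prod.ext ?_ (Prod.ext ?_ ?_)
  · exact hSeq
  · show stdz _ (leftFun_inj hpr g) = σ
    apply Equiv.ext
    intro q
    have key : ((Finset.image (leftFun hpr g) Finset.univ).orderIsoOfFin
          (stdz_card _ (leftFun_inj hpr g)) (stdz _ (leftFun_inj hpr g) q) : Fin (N + 1)) =
        ((Finset.image (leftFun hpr g) Finset.univ).orderIsoOfFin
          (stdz_card _ (leftFun_inj hpr g)) (σ q) : Fin (N + 1)) := by
      rw [stdz_spec, hleft,
        orderIsoOfFin_coe_congr hSeq (stdz_card _ (leftFun_inj hpr g)) hS]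
    exact ((Finset.image (leftFun hpr g) Finset.univ).orderIsoOfFin
      (stdz_card _ (leftFun_inj hpr g))).injective (Subtype.coe_injective key)
  · show (stdz _ (rightFun_inj hpr g)).trans Fin.revPerm = ρ
    apply Equiv.ext
    intro q
    show Fin.rev (stdz _ (rightFun_inj hpr g) q) = ρ q
    have key : ((Finset.image (rightFun hpr g) Finset.univ).orderIsoOfFin
          (stdz_card _ (rightFun_inj hpr g)) (stdz _ (rightFun_inj hpr g) q) : Fin (N + 1)) =
        ((Finset.image (rightFun hpr g) Finset.univ).orderIsoOfFin
          (stdz_card _ (rightFun_inj hpr g)) (Fin.rev (ρ q)) : Fin (N + 1)) := by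
      rw [stdz_spec, hright,
        orderIsoOfFin_coe_congr hTeq (stdz_card _ (rightFun_inj hpr g))
          (card_Tset hpr S hS hsub)]
    have := ((Finset.image (rightFun hpr g) Finset.univ).orderIsoOfFin
      (stdz_card _ (rightFun_inj hpr g))).injective (Subtype.coe_injective key)
    rw [this, Fin.rev_rev]

end Split

lemma perm_lt_flip {n : ℕ} (τ : Equiv.Perm (Fin n)) {u v : Fin n} (h : u ≠ v) :
    τ u < τ v ↔ ¬ (τ v < τ u) := by
  have hne : τ u ≠ τ v := fun hc => h (τ.injective hc)
  exact ⟨fun h1 h2 => absurd h1 (lt_asymm h2), fun h1 => hne.lt_or_gt.resolve_right h1⟩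

open scoped Classical in
lemma omega_eq_card_filter (b : List ℕ) :
    Omega b = (Finset.univ.filter fun τ : Equiv.Perm (Fin (b.sum + 1)) => MonotCond b τ).card := by
  rw [Omega, Nat.card_eq_fintype_card, Fintype.card_subtype]

set_option maxHeartbeats 2000000 in
open scoped Classical in
lemma split_count (a L R : List ℕ)
    (hsum : a.sum = L.sum + R.sum + 2)
    (hLa : ∀ m, m < L.sum → (UpAt a m ↔ UpAt L m))
    (hup : UpAt a L.sum)
    (hdown : ¬ UpAt a (L.sum + 1))
    (hRa : ∀ m, m < R.sum → (UpAt a (L.sum + 2 + m) ↔ ¬ UpAt R m)) :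
    (Finset.univ.filter fun τ : Equiv.Perm (Fin (a.sum + 1)) =>
        MonotCond a τ ∧ τ ⟨L.sum + 1, by omega⟩ = Fin.last a.sum).card =
      a.sum.choose (L.sum + 1) * (Omega L * Omega R) := by
  have hpr : (L.sum + 1) + 1 + (R.sum + 1) = a.sum + 1 := by omega
  have h1 : (Finset.univ.filter fun τ : Equiv.Perm (Fin (a.sum + 1)) =>
        MonotCond a τ ∧ τ ⟨L.sum + 1, by omega⟩ = Fin.last a.sum).card =
      ((Finset.univ.erase (Fin.last a.sum)).powersetCard (L.sum + 1) ×ˢ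
        (Finset.univ.filter fun σ : Equiv.Perm (Fin (L.sum + 1)) => MonotCond L σ) ×ˢ
        (Finset.univ.filter fun ρ : Equiv.Perm (Fin (R.sum + 1)) => MonotCond R ρ)).card := by
    refine Finset.card_nbij' (disassemble hpr)
      (fun x => if h : x.1.card = L.sum + 1 ∧ x.1 ⊆ Finset.univ.erase (Fin.last a.sum)
        then assemble hpr x.1 h.1 h.2 x.2.1 x.2.2 else 1) ?_ ?_ ?_ ?_
    · -- forward maps into target
      intro τ hτ
      obtain ⟨-, hmono, hpeak⟩ := Finset.mem_filter.mp hτ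
      have hmonoL : MonotCond L (stdz _ (leftFun_inj hpr τ)) := by
        rw [monotCond_iff_s7]
        intro m hm
        rw [stdz_lt_iff]
        have key := (monotCond_iff_s7 a τ).mp hmono m (by omega)
        exact key.trans (hLa m (by omega))
      have hmonoR : MonotCond R ((stdz _ (rightFun_inj hpr τ)).trans Fin.revPerm) := by
        rw [monotCond_iff_s7]
        intro m hm
        have hmR : m < R.sum := by omega
        simp only [Equiv.trans_apply, Fin.revPerm_apply]
        rw [Fin.rev_lt_rev, stdz_lt_iff]
        have key := (monotCond_iff_s7 a τ).mp hmono (L.sum + 2 + m) (by omega)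
        have hne : (⟨L.sum + 2 + m + 1, by omega⟩ : Fin (a.sum + 1)) ≠
            ⟨L.sum + 2 + m, by omega⟩ := Fin.ne_of_val_ne
              (by show L.sum + 2 + m + 1 ≠ L.sum + 2 + m; omega)
        exact (perm_lt_flip τ hne).trans
          ((not_congr key).trans ((not_congr (hRa m hmR)).trans not_not))
      refine Finset.mem_product.mpr ⟨?_, Finset.mem_product.mpr ⟨?_, ?_⟩⟩
      · exact Finset.mem_powersetCard.mpr ⟨leftSub hpr τ hpeak, stdz_card (leftFun hpr τ) (leftFun_inj hpr τ)⟩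
      · exact Finset.mem_filter.mpr ⟨Finset.mem_univ _, hmonoL⟩
      · exact Finset.mem_filter.mpr ⟨Finset.mem_univ _, hmonoR⟩
    · -- backward maps into source
      intro x hx
      obtain ⟨hx1, hx23⟩ := Finset.mem_product.mp hx
      obtain ⟨hx2, hx3⟩ := Finset.mem_product.mp hx23
      obtain ⟨hsub, hcard⟩ := Finset.mem_powersetCard.mp hx1
      have hσ := (Finset.mem_filter.mp hx2).2
      have hρ := (Finset.mem_filter.mp hx3).2
      have hc : x.1.card = L.sum + 1 ∧ x.1 ⊆ Finset.univ.erase (Fin.last a.sum) :=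
        ⟨hcard, hsub⟩
      simp only [dif_pos hc]
      refine Finset.mem_filter.mpr ⟨Finset.mem_univ _, ?_, ?_⟩
      · -- MonotCond a of the assembled permutation
        rw [monotCond_iff_s7]
        intro m hm
        rcases Nat.lt_or_ge m L.sum with hm1 | hm1
        · rw [assemble_apply_lt hpr x.1 hc.1 hc.2 x.2.1 x.2.2 ⟨m, by omega⟩
              (by show m < L.sum + 1; omega),
            assemble_apply_lt hpr x.1 hc.1 hc.2 x.2.1 x.2.2 ⟨m + 1, hm⟩
              (by show m + 1 < L.sum + 1; omega),
            Subtype.coe_lt_coe, OrderIso.lt_iff_lt]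
          have keyL := (monotCond_iff_s7 L x.2.1).mp hσ m (by omega)
          exact keyL.trans (hLa m hm1).symm
        rcases Nat.lt_or_ge m (L.sum + 1) with hm2 | hm2
        · -- m = L.sum
          rw [assemble_apply_lt hpr x.1 hc.1 hc.2 x.2.1 x.2.2 ⟨m, by omega⟩
              (by show m < L.sum + 1; omega),
            assemble_apply_eq hpr x.1 hc.1 hc.2 x.2.1 x.2.2 ⟨m + 1, hm⟩
              (by show m + 1 = L.sum + 1; omega)]
          refine iff_of_true ?_ (by rw [show m = L.sum by omega]; exact hup)
          refine Fin.lt_last_iff_ne_last.mpr (fun hlast => ?_)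
          exact last_not_mem_of_sub hc.2 (hlast ▸ (x.1.orderIsoOfFin hc.1 _).2)
        rcases Nat.lt_or_ge m (L.sum + 2) with hm3 | hm3
        · -- m = L.sum + 1
          rw [assemble_apply_eq hpr x.1 hc.1 hc.2 x.2.1 x.2.2 ⟨m, by omega⟩
              (by show m = L.sum + 1; omega),
            assemble_apply_gt hpr x.1 hc.1 hc.2 x.2.1 x.2.2 ⟨m + 1, hm⟩
              (by show L.sum + 1 < m + 1; omega)]
          exact iff_of_false (not_lt.mpr (Fin.le_last _))
            (by rw [show m = L.sum + 1 by omega]; exact hdown)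
        · -- m ≥ L.sum + 2
          obtain ⟨u, rfl⟩ : ∃ u, m = L.sum + 2 + u := ⟨m - (L.sum + 2), by omega⟩
          have hu : u < R.sum := by omega
          rw [assemble_apply_gt hpr x.1 hc.1 hc.2 x.2.1 x.2.2 ⟨L.sum + 2 + u, by omega⟩
              (by show L.sum + 1 < L.sum + 2 + u; omega),
            assemble_apply_gt hpr x.1 hc.1 hc.2 x.2.1 x.2.2 ⟨L.sum + 2 + u + 1, hm⟩
              (by show L.sum + 1 < L.sum + 2 + u + 1; omega),
            Subtype.coe_lt_coe, OrderIso.lt_iff_lt, Fin.rev_lt_rev]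
          have e3 : (⟨L.sum + 2 + u - (L.sum + 1 + 1), by omega⟩ : Fin (R.sum + 1)) =
              ⟨u, by omega⟩ := Fin.val_injective (by show L.sum + 2 + u - (L.sum + 1 + 1) = u; omega)
          have e4 : (⟨L.sum + 2 + u + 1 - (L.sum + 1 + 1), by omega⟩ : Fin (R.sum + 1)) =
              ⟨u + 1, by omega⟩ := Fin.val_injective
                (by show L.sum + 2 + u + 1 - (L.sum + 1 + 1) = u + 1; omega)
          rw [e3, e4]
          have keyR := (monotCond_iff_s7 R x.2.2).mp hρ u (by omega)
          have hne : (⟨u + 1, by omega⟩ : Fin (R.sum + 1)) ≠ ⟨u, by omega⟩ :=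
            Fin.ne_of_val_ne (by show u + 1 ≠ u; omega)
          exact (perm_lt_flip x.2.2 hne).trans
            ((not_congr keyR).trans (hRa u hu).symm)
      · exact assemble_apply_eq hpr x.1 hc.1 hc.2 x.2.1 x.2.2 ⟨L.sum + 1, by omega⟩ rfl
    · -- left inverse
      intro τ hτ
      obtain ⟨-, hmono, hpeak⟩ := Finset.mem_filter.mp hτ
      have hc : (disassemble hpr τ).1.card = L.sum + 1 ∧
          (disassemble hpr τ).1 ⊆ Finset.univ.erase (Fin.last a.sum) :=
        ⟨stdz_card (leftFun hpr τ) (leftFun_inj hpr τ), leftSub hpr τ hpeak⟩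
      simp only [dif_pos hc]
      exact assemble_disassemble hpr τ hpeak hc.1 hc.2
    · -- right inverse
      intro x hx
      obtain ⟨hx1, -⟩ := Finset.mem_product.mp hx
      obtain ⟨hsub, hcard⟩ := Finset.mem_powersetCard.mp hx1
      have hc : x.1.card = L.sum + 1 ∧ x.1 ⊆ Finset.univ.erase (Fin.last a.sum) :=
        ⟨hcard, hsub⟩
      simp only [dif_pos hc]
      exact disassemble_assemble hpr x.1 hc.1 hc.2 x.2.1 x.2.2
  rw [h1, Finset.card_product, Finset.card_product, Finset.card_powersetCard,
    Finset.card_erase_of_mem (Finset.mem_univ _), Finset.card_univ, Fintype.card_fin,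
    Nat.add_sub_cancel, ← omega_eq_card_filter L, ← omega_eq_card_filter R]

/-- The normalized quantity `Ω'(a) = Ω(a) / (N + 1)!` where `N = a.sum`. -/
noncomputable def Omega' (a : List ℕ) : ℝ :=
  (Omega a : ℝ) / (Nat.factorial (a.sum + 1))


/-- The interleaved list `[i t₁, j t₁, i t₂, j t₂, …]` for the indices in `l`. -/
def pairList (i j : ℕ → ℕ) (l : List ℕ) : List ℕ :=
  (l.map fun t => [i t, j t]).flatten

variable (i j : ℕ → ℕ)

lemma pairList_nil : pairList i j [] = [] := rfl

lemma pairList_cons (s : ℕ) (l : List ℕ) :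
    pairList i j (s :: l) = i s :: j s :: pairList i j l := rfl

lemma pairList_append (l₁ l₂ : List ℕ) :
    pairList i j (l₁ ++ l₂) = pairList i j l₁ ++ pairList i j l₂ := by
  simp [pairList]

lemma pairList_length (l : List ℕ) : (pairList i j l).length = 2 * l.length := by
  induction l with
  | nil => rfl
  | cons s l ih => simp [pairList_cons, ih]; omega

lemma pairList_sum (l : List ℕ) :
    (pairList i j l).sum = (l.map fun s => i s + j s).sum := by
  induction l with
  | nil => rfl
  | cons s l ih => simp [pairList_cons, ih]; omega

lemma sum_map_range (g : ℕ → ℕ) (t : ℕ) :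
    ((List.range t).map g).sum = ∑ s ∈ Finset.range t, g s := by
  induction t with
  | zero => rfl
  | succ t ih => rw [List.range_succ, Finset.sum_range_succ, ← ih]; simp

lemma pairList_take_even (l : List ℕ) (t : ℕ) :
    ((pairList i j l).take (2 * t)).sum = ((l.take t).map fun s => i s + j s).sum := by
  induction l generalizing t with
  | nil => simp [pairList_nil]
  | cons s l ih =>
    cases t with
    | zero => simp
    | succ t =>
      rw [pairList_cons, show 2 * (t + 1) = 2 * t + 1 + 1 by omega]
      simp only [List.take_succ_cons, List.sum_cons, List.map_cons]
      rw [ih]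
      omega

lemma pairList_take_odd (l : List ℕ) (t : ℕ) (h : t < l.length) :
    ((pairList i j l).take (2 * t + 1)).sum =
      ((l.take t).map fun s => i s + j s).sum + i (l.get ⟨t, h⟩) := by
  induction l generalizing t with
  | nil => simp at h
  | cons s l ih =>
    cases t with
    | zero => simp [pairList_cons]
    | succ t =>
      rw [pairList_cons, show 2 * (t + 1) + 1 = 2 * t + 1 + 1 + 1 by omega]
      simp only [List.take_succ_cons, List.sum_cons, List.map_cons, List.get_cons_succ]
      rw [ih t (by simpa using h)]
      omega

lemma range_split (n k : ℕ) (h : k ≤ n) :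
    List.range n = List.range k ++ (List.range n).drop k := by
  conv_lhs => rw [← List.take_append_drop k (List.range n), List.take_range,
    Nat.min_eq_left h]

lemma real_identity (N p x y : ℕ) (hp : p ≤ N) :
    ((N.choose p * (x * y) : ℕ) : ℝ) / (Nat.factorial (N + 1)) =
      1 / ((N : ℝ) + 1) *
        ((x : ℝ) / (Nat.factorial p) * ((y : ℝ) / (Nat.factorial (N - p)))) := by
  have hC := Nat.choose_mul_factorial_mul_factorial hp
  have h1 : ((Nat.factorial (N + 1) : ℕ) : ℝ) =
      ((N : ℝ) + 1) * ((N.choose p : ℝ) * (Nat.factorial p : ℝ) *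
        (Nat.factorial (N - p) : ℝ)) := by
    rw [Nat.factorial_succ, ← hC]
    push_cast
    ring
  have hc0 : (N.choose p : ℝ) ≠ 0 := Nat.cast_ne_zero.mpr (Nat.choose_pos hp).ne'
  have hf1 : ((Nat.factorial p : ℕ) : ℝ) ≠ 0 := Nat.cast_ne_zero.mpr (Nat.factorial_ne_zero p)
  have hf2 : ((Nat.factorial (N - p) : ℕ) : ℝ) ≠ 0 :=
    Nat.cast_ne_zero.mpr (Nat.factorial_ne_zero _)
  have hN1 : ((N : ℝ) + 1) ≠ 0 := by positivity
  rw [h1]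
  push_cast
  field_simp

set_option maxHeartbeats 2000000 in
theorem stmt_7 (n : ℕ) (hn : 1 ≤ n) (i j : ℕ → ℕ)
    (hi : ∀ k < n, 0 < i k) (hj : ∀ k < n, 0 < j k) :
    Omega' (pairList i j (List.range n)) =
      (1 / ((∑ k ∈ Finset.range n, (i k + j k) : ℕ) + 1 : ℝ)) *
        ∑ k ∈ Finset.range n,
          Omega' (pairList i j (List.range k) ++ [i k - 1]) *
            Omega' ((j k - 1) :: pairList i j ((List.range n).drop (k + 1))) := by
  classical
  set P : ℕ → ℕ := fun t => ∑ s ∈ Finset.range t, (i s + j s) with hPdef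
  set A : List ℕ := pairList i j (List.range n) with hAdef
  have hPmono : ∀ {t t' : ℕ}, t ≤ t' → P t ≤ P t' := fun h =>
    Finset.sum_le_sum_of_subset (Finset.range_subset_range.mpr h)
  have hPstep : ∀ t, P (t + 1) = P t + (i t + j t) := fun t => Finset.sum_range_succ _ t
  have hP0 : P 0 = 0 := rfl
  have hAsum : A.sum = P n := by rw [hAdef, pairList_sum, sum_map_range]
  have hAlen : A.length = 2 * n := by rw [hAdef, pairList_length, List.length_range]
  have hAeven : ∀ t, t ≤ n → ((A.take (2 * t)).sum = P t) := by
    intro t ht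
    rw [hAdef, pairList_take_even, List.take_range, Nat.min_eq_left ht, sum_map_range]
  have hAodd : ∀ t, t < n → ((A.take (2 * t + 1)).sum = P t + i t) := by
    intro t ht
    rw [hAdef, pairList_take_odd i j (List.range n) t (by simpa using ht),
      List.take_range, Nat.min_eq_left ht.le, sum_map_range]
    simp
    rfl
  -- characterization of the increasing steps of A
  have hUa : ∀ m, UpAt A m ↔ ∃ t, t < n ∧ P t ≤ m ∧ m < P t + i t := by
    intro m
    constructor
    · rintro ⟨w, hw, hpar, h1, h2⟩
      obtain ⟨t, rfl⟩ : ∃ t, w = 2 * t := ⟨w / 2, by omega⟩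
      have ht : t < n := by rw [hAlen] at hw; omega
      rw [hAeven t ht.le] at h1
      rw [hAodd t ht] at h2
      exact ⟨t, ht, h1, h2⟩
    · rintro ⟨t, ht, h1, h2⟩
      exact ⟨2 * t, by rw [hAlen]; omega, by omega,
        by rw [hAeven t ht.le]; exact h1, by rw [hAodd t ht]; exact h2⟩
  -- location of the maximum
  have hpeak_char : ∀ (τ : Equiv.Perm (Fin (A.sum + 1))), MonotCond A τ →
      ∀ q : Fin (A.sum + 1), τ q = Fin.last A.sum → ∃ k, k < n ∧ (q : ℕ) = P k + i k := by
    intro τ hmono q htop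
    have key := (monotCond_iff_s7 A τ).mp hmono
    have hi0 := hi 0 hn
    have hj0 := hj 0 hn
    have hA2 : 2 ≤ A.sum := by
      have h1 : P 1 ≤ P n := hPmono hn
      have h2 : P 1 = P 0 + (i 0 + j 0) := hPstep 0
      omega
    have hne_top : ∀ x : Fin (A.sum + 1), x ≠ q → τ x ≠ Fin.last A.sum :=
      fun x hx hc => hx (τ.injective (hc.trans htop.symm))
    have hnot : (q : ℕ) < A.sum → ¬ UpAt A (q : ℕ) := by
      intro hq hup2
      have h := (key (q : ℕ) (by omega)).mpr hup2
      rw [show (⟨(q : ℕ), by omega⟩ : Fin (A.sum + 1)) = q from Fin.val_injective rfl,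
        htop] at h
      exact absurd h (not_lt.mpr (Fin.le_last _))
    have hyes : 0 < (q : ℕ) → UpAt A ((q : ℕ) - 1) := by
      intro hq
      refine (key ((q : ℕ) - 1) (by have := q.isLt; omega)).mp ?_
      have e : (⟨(q : ℕ) - 1 + 1, by have := q.isLt; omega⟩ : Fin (A.sum + 1)) = q :=
        Fin.val_injective (by show (q : ℕ) - 1 + 1 = q; omega)
      rw [e, htop]
      exact Fin.lt_last_iff_ne_last.mpr (hne_top _ (Fin.ne_of_val_ne (by show (q : ℕ) - 1 ≠ (q : ℕ); omega)))
    rcases Nat.eq_zero_or_pos (q : ℕ) with h0 | h0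
    · exfalso
      refine hnot (by omega) ?_
      rw [h0]
      exact (hUa 0).mpr ⟨0, by omega, by omega, by omega⟩
    obtain ⟨t, ht, hb1, hb2⟩ := (hUa _).mp (hyes h0)
    rcases Nat.lt_or_ge (q : ℕ) A.sum with hqlt | hqge
    · have h2 := hnot hqlt
      rw [hUa] at h2
      push_neg at h2
      have := h2 t ht
      exact ⟨t, ht, by omega⟩
    · exfalso
      have hq : (q : ℕ) = A.sum := by have := q.isLt; omega
      have h3 : P (t + 1) ≤ P n := hPmono ht
      have h4 := hPstep t
      have h5 := hj t ht
      omega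
  have hple : ∀ k, k < n → P k + i k ≤ A.sum := by
    intro k hk
    have h1 : P (k + 1) ≤ P n := hPmono hk
    have := hPstep k
    have := hj k hk
    omega
  have hinj : ∀ k k', k < n → k' < n → P k + i k = P k' + i k' → k = k' := by
    intro k k' hk hk' he
    by_contra hne
    rcases Nat.lt_or_ge k k' with h | h
    · have h1 := hPstep k
      have h2 : P (k + 1) ≤ P k' := hPmono h
      have := hj k hk
      have := hi k' hk'
      omega
    · have hlt : k' < k := by omega
      have h1 := hPstep k'
      have h2 : P (k' + 1) ≤ P k := hPmono hlt
      have := hj k' hk'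
      have := hi k hk
      omega
  -- partition by the position of the maximum
  have hcover : (Finset.univ.filter fun τ : Equiv.Perm (Fin (A.sum + 1)) => MonotCond A τ) =
      (Finset.range n).biUnion (fun k => Finset.univ.filter
        fun τ : Equiv.Perm (Fin (A.sum + 1)) => MonotCond A τ ∧
          ((τ.symm (Fin.last A.sum)) : ℕ) = P k + i k) := by
    ext τ
    simp only [Finset.mem_filter, Finset.mem_biUnion, Finset.mem_range, Finset.mem_univ,
      true_and]
    constructor
    · intro hm
      obtain ⟨k, hk, hqv⟩ := hpeak_char τ hm (τ.symm (Fin.last A.sum))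
        (τ.apply_symm_apply _)
      exact ⟨k, hk, hm, hqv⟩
    · rintro ⟨k, -, hm, -⟩
      exact hm
  have hdisj : ∀ x ∈ Finset.range n, ∀ y ∈ Finset.range n, x ≠ y →
      Disjoint (Finset.univ.filter fun τ : Equiv.Perm (Fin (A.sum + 1)) => MonotCond A τ ∧
          ((τ.symm (Fin.last A.sum)) : ℕ) = P x + i x)
        (Finset.univ.filter fun τ : Equiv.Perm (Fin (A.sum + 1)) => MonotCond A τ ∧
          ((τ.symm (Fin.last A.sum)) : ℕ) = P y + i y) := by
    intro x hx y hy hxy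
    rw [Finset.disjoint_left]
    intro τ h1 h2
    have e1 := (Finset.mem_filter.mp h1).2.2
    have e2 := (Finset.mem_filter.mp h2).2.2
    exact hxy (hinj x y (Finset.mem_range.mp hx) (Finset.mem_range.mp hy) (e1 ▸ e2 ▸ rfl))
  have hcard1 : Omega A = ∑ k ∈ Finset.range n,
      (Finset.univ.filter fun τ : Equiv.Perm (Fin (A.sum + 1)) => MonotCond A τ ∧
        ((τ.symm (Fin.last A.sum)) : ℕ) = P k + i k).card := by
    rw [omega_eq_card_filter, hcover, Finset.card_biUnion hdisj]
  -- list facts for the split lists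
  have hLsum : ∀ k, (pairList i j (List.range k) ++ [i k - 1]).sum = P k + (i k - 1) := by
    intro k
    rw [List.sum_append, pairList_sum, sum_map_range]
    simp
    rfl
  have hRsum : ∀ k, k < n → ((j k - 1) :: pairList i j ((List.range n).drop (k + 1))).sum
      = (j k - 1) + (P n - P (k + 1)) := by
    intro k hk
    have hsplit1 : List.range n = List.range (k + 1) ++ (List.range n).drop (k + 1) :=
      range_split n (k + 1) (by omega)
    have hdropsum : (((List.range n).drop (k + 1)).map fun s => i s + j s).sum
        = P n - P (k + 1) := by
      have hc := congrArg (fun l : List ℕ => (l.map fun s => i s + j s).sum) hsplit1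
      simp only [List.map_append, List.sum_append, sum_map_range] at hc
      rw [show (∑ s ∈ Finset.range n, (i s + j s)) = P n from rfl,
        show (∑ s ∈ Finset.range (k + 1), (i s + j s)) = P (k + 1) from rfl] at hc
      omega
    rw [List.sum_cons, pairList_sum, hdropsum]
  -- the main counting identity, for each k
  have hterm : ∀ k, k < n →
      (Finset.univ.filter fun τ : Equiv.Perm (Fin (A.sum + 1)) => MonotCond A τ ∧
        ((τ.symm (Fin.last A.sum)) : ℕ) = P k + i k).card =
      A.sum.choose (P k + i k) *
        (Omega (pairList i j (List.range k) ++ [i k - 1]) *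
         Omega ((j k - 1) :: pairList i j ((List.range n).drop (k + 1)))) := by
    intro k hk
    set L : List ℕ := pairList i j (List.range k) ++ [i k - 1] with hLdef
    set R : List ℕ := (j k - 1) :: pairList i j ((List.range n).drop (k + 1)) with hRdef
    have hik := hi k hk
    have hjk := hj k hk
    have hLs : L.sum = P k + (i k - 1) := hLsum k
    have hRs : R.sum = (j k - 1) + (P n - P (k + 1)) := hRsum k hk
    have hLlen : L.length = 2 * k + 1 := by
      rw [hLdef, List.length_append, pairList_length, List.length_range]
      simp
    have hRlen : R.length = 2 * (n - k - 1) + 1 := by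
      rw [hRdef, List.length_cons, pairList_length, List.length_drop, List.length_range]
      omega
    have hplek : P (k + 1) ≤ P n := hPmono hk
    have hstepk := hPstep k
    have hsum2 : A.sum = L.sum + R.sum + 2 := by rw [hAsum, hLs, hRs]; omega
    -- take sums of L agree with those of A
    have hLA : ∀ w, w ≤ 2 * k → (L.take w).sum = (A.take w).sum := by
      intro w hw
      have hsplitk : List.range n = List.range k ++ (List.range n).drop k :=
        range_split n k hk.le
      have hlenk : (pairList i j (List.range k)).length = 2 * k := by
        rw [pairList_length, List.length_range]
      rw [hLdef, List.take_append_of_le_length (by rw [hlenk]; omega)]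
      conv_rhs => rw [hAdef, hsplitk, pairList_append,
        List.take_append_of_le_length (by rw [hlenk]; omega)]
    have hLfull : ∀ w, 2 * k + 1 ≤ w → (L.take w).sum = P k + (i k - 1) := by
      intro w hw
      rw [List.take_of_length_le (by rw [hLlen]; omega), hLs]
    -- take sums of R vs take sums of A
    have hRA : ∀ v, (A.take (2 * k + 2 + v)).sum = (R.take (1 + v)).sum + (P k + i k + 1) := by
      intro v
      have hsplit1 : List.range n = List.range (k + 1) ++ (List.range n).drop (k + 1) :=
        range_split n (k + 1) (by omega)
      have hlen1 : (pairList i j (List.range (k + 1))).length = 2 * k + 2 := by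
        rw [pairList_length, List.length_range]; omega
      have e1 : (A.take (2 * k + 2 + v)).sum =
          P (k + 1) + ((pairList i j ((List.range n).drop (k + 1))).take v).sum := by
        conv_lhs => rw [hAdef, hsplit1, pairList_append,
          show 2 * k + 2 + v = (pairList i j (List.range (k + 1))).length + v by
            rw [hlen1]]
        rw [List.take_length_add_append, List.sum_append, pairList_sum, sum_map_range]
      have e2 : (R.take (1 + v)).sum =
          (j k - 1) + ((pairList i j ((List.range n).drop (k + 1))).take v).sum := by
        rw [hRdef, show (1 + v) = v + 1 by omega, List.take_succ_cons, List.sum_cons]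
      rw [e1, e2]
      omega
    -- the four hypotheses of split_count
    have hLa : ∀ m, m < L.sum → (UpAt A m ↔ UpAt L m) := by
      intro m hm
      constructor
      · rintro ⟨w, hw, hpar, h1, h2⟩
        obtain ⟨t, rfl⟩ : ∃ t, w = 2 * t := ⟨w / 2, by omega⟩
        have htn : t < n := by rw [hAlen] at hw; omega
        rw [hAeven t htn.le] at h1
        rw [hAodd t htn] at h2
        have htk : t ≤ k := by
          by_contra hgt
          have h3 : P (k + 1) ≤ P t := hPmono (by omega)
          rw [hLs] at hm
          omega
        rcases Nat.lt_or_ge t k with hlt | hge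
        · refine ⟨2 * t, by rw [hLlen]; omega, by omega, ?_, ?_⟩
          · rw [hLA (2 * t) (by omega), hAeven t htn.le]; exact h1
          · rw [show 2 * t + 1 = 2 * t + 1 from rfl, hLA (2 * t + 1) (by omega),
              hAodd t htn]; exact h2
        · have hteq : t = k := by omega
          subst hteq
          refine ⟨2 * t, by rw [hLlen]; omega, by omega, ?_, ?_⟩
          · rw [hLA (2 * t) (by omega), hAeven t htn.le]; exact h1
          · rw [List.take_of_length_le hLlen.le]
            exact hm
      · rintro ⟨w, hw, hpar, h1, h2⟩
        obtain ⟨t, rfl⟩ : ∃ t, w = 2 * t := ⟨w / 2, by omega⟩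
        have htk : t ≤ k := by rw [hLlen] at hw; omega
        have htn : t < n := by omega
        refine ⟨2 * t, by rw [hAlen]; omega, by omega, ?_, ?_⟩
        · rw [← hLA (2 * t) (by omega)]; exact h1
        · rcases Nat.lt_or_ge t k with hlt | hge
          · rw [← hLA (2 * t + 1) (by omega)]; exact h2
          · have hteq : t = k := by omega
            subst hteq
            rw [hAodd t htn]
            rw [List.take_of_length_le hLlen.le, hLs] at h2
            omega
    have hup : UpAt A L.sum := by
      refine ⟨2 * k, by rw [hAlen]; omega, by omega, ?_, ?_⟩
      · rw [hAeven k hk.le, hLs]; omega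
      · rw [hAodd k hk, hLs]; omega
    have hdown : ¬ UpAt A (L.sum + 1) := by
      rintro ⟨w, hw, hpar, h1, h2⟩
      obtain ⟨t, rfl⟩ : ∃ t, w = 2 * t := ⟨w / 2, by omega⟩
      have htn : t < n := by rw [hAlen] at hw; omega
      rw [hAeven t htn.le] at h1
      rw [hAodd t htn] at h2
      rw [hLs] at h1 h2
      rcases Nat.lt_or_ge t (k + 1) with hle | hgt
      · have hPt : P t + i t ≤ P k + i k := by
          rcases Nat.lt_or_ge t k with hlt | hge
          · have e1 := hPstep t
            have e2 : P (t + 1) ≤ P k := hPmono hlt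
            have := hj t htn
            omega
          · have : t = k := by omega
            subst this
            omega
        omega
      · have h3 : P (k + 1) ≤ P t := hPmono hgt
        omega
    have hRa : ∀ m, m < R.sum → (UpAt A (L.sum + 2 + m) ↔ ¬ UpAt R m) := by
      intro m hm
      have hm' : L.sum + 2 + m = P k + i k + 1 + m := by rw [hLs]; omega
      constructor
      · rintro ⟨w, hw, hpar, h1, h2⟩ hR
        obtain ⟨t, rfl⟩ : ∃ t, w = 2 * t := ⟨w / 2, by omega⟩
        have htn : t < n := by rw [hAlen] at hw; omega
        have h1p := h1
        have h2p := h2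
        rw [hAeven t htn.le] at h1p
        rw [hAodd t htn] at h2p
        have htk : k + 1 ≤ t := by
          by_contra hc
          have hPt : P t + i t ≤ P k + i k := by
            rcases Nat.lt_or_ge t k with hlt | hge
            · have e1 := hPstep t
              have e2 : P (t + 1) ≤ P k := hPmono hlt
              have := hj t htn
              omega
            · have : t = k := by omega
              subst this
              omega
          rw [hLs] at h1p h2p
          omega
        obtain ⟨w', hw', hpar', g1, g2⟩ := hR
        rcases Nat.eq_zero_or_pos w' with h0 | h0
        · subst h0
          have hg2 : m < j k - 1 := by
            have : (R.take 1).sum = j k - 1 := by rw [hRdef]; simp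
            rw [this] at g2
            exact g2
          have h3 : P (k + 1) ≤ P t := hPmono htk
          rw [hLs] at h1p
          omega
        · obtain ⟨u, rfl⟩ : ∃ u, w' = 1 + (2 * u + 1) := ⟨(w' - 2) / 2, by omega⟩
          have c1 : (A.take (2 * k + 2 + (2 * u + 1))).sum ≤ L.sum + 2 + m := by
            rw [hRA (2 * u + 1), hm']
            omega
          have c2 : L.sum + 2 + m < (A.take (2 * k + 2 + (2 * u + 1) + 1)).sum := by
            rw [show 2 * k + 2 + (2 * u + 1) + 1 = 2 * k + 2 + (2 * u + 2) by omega,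
              hRA (2 * u + 2), hm',
              show 1 + (2 * u + 2) = 1 + (2 * u + 1) + 1 by omega]
            omega
          have := block_unique A h1 h2 c1 c2
          omega
      · intro hnup
        obtain ⟨w', hw', g1, g2⟩ := exists_block_s7 R m (by omega)
        have hodd : w' % 2 = 1 := by
          rcases Nat.mod_two_eq_zero_or_one w' with he | ho
          · exact absurd ⟨w', hw', he, g1, g2⟩ hnup
          · exact ho
        obtain ⟨u, rfl⟩ : ∃ u, w' = 1 + 2 * u := ⟨(w' - 1) / 2, by omega⟩
        have hub : u < n - k - 1 := by rw [hRlen] at hw'; omega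
        refine ⟨2 * k + 2 + 2 * u, by rw [hAlen]; omega, by omega, ?_, ?_⟩
        · rw [show 2 * k + 2 + 2 * u = 2 * k + 2 + (2 * u) from rfl, hRA (2 * u), hm']
          omega
        · rw [show 2 * k + 2 + 2 * u + 1 = 2 * k + 2 + (2 * u + 1) by omega,
            hRA (2 * u + 1), hm']
          have : (R.take (1 + 2 * u + 1)).sum = (R.take (1 + (2 * u + 1))).sum := by
            rw [show 1 + 2 * u + 1 = 1 + (2 * u + 1) by omega]
          rw [← this]
          omega
    have hsc := split_count A L R hsum2 hLa hup hdown hRa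
    have hLs1 : L.sum + 1 = P k + i k := by rw [hLs]; omega
    have hpf : P k + i k < A.sum + 1 := by have := hple k hk; omega
    have hsetq : (Finset.univ.filter fun τ : Equiv.Perm (Fin (A.sum + 1)) =>
        MonotCond A τ ∧ ((τ.symm (Fin.last A.sum)) : ℕ) = P k + i k) =
        (Finset.univ.filter fun τ : Equiv.Perm (Fin (A.sum + 1)) =>
          MonotCond A τ ∧ τ ⟨L.sum + 1, by omega⟩ = Fin.last A.sum) := by
      apply Finset.filter_congr
      intro τ _
      apply and_congr_right
      intro _
      rw [show ((τ.symm (Fin.last A.sum) : ℕ) = P k + i k) ↔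
          (τ.symm (Fin.last A.sum) = ⟨L.sum + 1, by omega⟩) from by
        rw [Fin.ext_iff]
        show _ ↔ ((τ.symm (Fin.last A.sum) : ℕ) = L.sum + 1)
        omega]
      rw [Equiv.symm_apply_eq, eq_comm]
    rw [hsetq, hsc, hLs1]
  -- put everything together
  have hΩ : Omega A = ∑ k ∈ Finset.range n,
      A.sum.choose (P k + i k) *
        (Omega (pairList i j (List.range k) ++ [i k - 1]) *
         Omega ((j k - 1) :: pairList i j ((List.range n).drop (k + 1)))) :=
    hcard1.trans (Finset.sum_congr rfl fun k hk => hterm k (Finset.mem_range.mp hk))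
  have hPn : (∑ k ∈ Finset.range n, (i k + j k)) = P n := rfl
  rw [hPn]
  show (Omega A : ℝ) / (Nat.factorial (A.sum + 1)) = _
  rw [hΩ, Nat.cast_sum, Finset.sum_div, Finset.mul_sum]
  apply Finset.sum_congr rfl
  intro k hk
  have hk' := Finset.mem_range.mp hk
  have hLs1 : (pairList i j (List.range k) ++ [i k - 1]).sum + 1 = P k + i k := by
    rw [hLsum k]
    have := hi k hk'
    omega
  have hRs1 : ((j k - 1) :: pairList i j ((List.range n).drop (k + 1))).sum + 1 =
      A.sum - (P k + i k) := by
    rw [hRsum k hk', hAsum]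
    have h1 : P (k + 1) ≤ P n := hPmono hk'
    have := hPstep k
    have := hj k hk'
    have := hi k hk'
    omega
  show _ = 1 / ((P n : ℝ) + 1) *
      ((Omega (pairList i j (List.range k) ++ [i k - 1]) : ℝ) /
          (Nat.factorial ((pairList i j (List.range k) ++ [i k - 1]).sum + 1)) *
        ((Omega ((j k - 1) :: pairList i j ((List.range n).drop (k + 1))) : ℝ) /
          (Nat.factorial (((j k - 1) :: pairList i j ((List.range n).drop (k + 1))).sum + 1))))
  rw [hLs1, hRs1, ← hAsum]
  exact real_identity A.sum (P k + i k)
    (Omega (pairList i j (List.range k) ++ [i k - 1]))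
    (Omega ((j k - 1) :: pairList i j ((List.range n).drop (k + 1))))
    (hple k hk')
end
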